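/- arXiv:2407.18429 — 5 statements merged into one kernel-verified Lean document; each statement's English description precedes it below -/
import Mathlib

section
/- The Hodge bundle is the unique congruence theta characteristic (group-theoretic form): Let N₁, N₂ be positive integers with gcd(N₁,N₂) odd and lcm(N₁,N₂) ≥ 5, and let Γ = Γ₁(N₁) ⊓ Γ(N₂) ≤ SL(2,ℤ). Suppose Γ' ≤ SL(2,ℤ) is a subgroup such that: (i) −I ∉ Γ'; (ii) {±A : A ∈ Γ'} = {±A : A ∈ Γ}; (iii) every parabolic element of Γ lies in Γ', i.e., every γ ∈ Γ with γ ≠ 1 and trace(γ) ∈ {2, −2} belongs to Γ' (so Γ' is a hyperbolic projective lift of Γ); and (iv) Γ' is a congruence subgroup, i.e., Γ(M) ≤ Γ' for some positive integer M. Then Γ' = Γ. -/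
open Matrix MatrixGroups CongruenceSubgroup

instance : Fact (Even (Fintype.card (Fin 2))) := ⟨⟨1, rfl⟩⟩

/-- The set `{±A : A ∈ S}` of a set of matrices together with its negatives, i.e. the
preimage of the image of `S` in `PSL(2,ℤ)`. -/
def pmSet (S : Set SL(2, ℤ)) : Set SL(2, ℤ) := {A | A ∈ S ∨ -A ∈ S}

namespace HodgeAux

/-- Entrywise congruence of integer matrices modulo `m`. -/
def ModC (m : ℕ) (A B : Matrix (Fin 2) (Fin 2) ℤ) : Prop :=
  ∀ i j, (m : ℤ) ∣ (A i j - B i j)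

theorem ModC.refl (m : ℕ) (A : Matrix (Fin 2) (Fin 2) ℤ) : ModC m A A := by
  intro i j; simp

theorem ModC.symm {m A B} (h : ModC m A B) : ModC m B A := by
  intro i j; rw [← neg_sub]; exact dvd_neg.2 (h i j)

theorem ModC.of_dvd {m m' : ℕ} {A B} (hd : m' ∣ m) (h : ModC m A B) : ModC m' A B := by
  intro i j; exact dvd_trans (Int.natCast_dvd_natCast.2 hd) (h i j)

theorem ModC.mul {m : ℕ} {A B C D : Matrix (Fin 2) (Fin 2) ℤ}
    (h1 : ModC m A B) (h2 : ModC m C D) : ModC m (A * C) (B * D) := by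
  intro i j
  have : (A * C) i j - (B * D) i j
      = A i 0 * (C 0 j - D 0 j) + (A i 0 - B i 0) * D 0 j
        + (A i 1 * (C 1 j - D 1 j) + (A i 1 - B i 1) * D 1 j) := by
    simp [Matrix.mul_apply, Fin.sum_univ_two]; ring
  rw [this]
  exact dvd_add (dvd_add (Dvd.dvd.mul_left (h2 0 j) _) (Dvd.dvd.mul_right (h1 i 0) _))
    (dvd_add (Dvd.dvd.mul_left (h2 1 j) _) (Dvd.dvd.mul_right (h1 i 1) _))

theorem ModC.mul_left {m : ℕ} (C : Matrix (Fin 2) (Fin 2) ℤ) {A B}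
    (h : ModC m A B) : ModC m (C * A) (C * B) :=
  ModC.mul (ModC.refl m C) h

/-- Congruence `q ≡ h mod m` gives `q⁻¹ * h ≡ 1 mod m` for `SL(2,ℤ)` elements. -/
theorem ModC.inv_mul {m : ℕ} {q h : SL(2, ℤ)}
    (hqh : ModC m (↑q : Matrix (Fin 2) (Fin 2) ℤ) ↑h) :
    ModC m (↑(q⁻¹ * h) : Matrix (Fin 2) (Fin 2) ℤ) 1 := by
  have h2 := ModC.mul_left ((↑(q⁻¹) : Matrix (Fin 2) (Fin 2) ℤ)) hqh
  rw [← Matrix.SpecialLinearGroup.coe_mul, ← Matrix.SpecialLinearGroup.coe_mul,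
    inv_mul_cancel, Matrix.SpecialLinearGroup.coe_one] at h2
  exact (ModC.symm h2)

theorem ModC.combine {m p : ℕ} (hcop : Nat.Coprime m p) {A B}
    (h1 : ModC m A B) (h2 : ModC p A B) : ModC (m * p) A B := by
  intro i j
  have := (Nat.isCoprime_iff_coprime.2 hcop).mul_dvd (h1 i j) (h2 i j)
  exact_mod_cast this

theorem mem_Gamma_iff {m : ℕ} {γ : SL(2, ℤ)} :
    γ ∈ Gamma m ↔ ModC m (↑γ : Matrix (Fin 2) (Fin 2) ℤ) 1 := by
  rw [Gamma_mem]
  constructor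
  · rintro ⟨ha, hb, hc, hd⟩ i j
    fin_cases i <;> fin_cases j <;>
      simp only [Matrix.one_apply] <;>
      rw [← ZMod.intCast_zmod_eq_zero_iff_dvd] <;>
      push_cast <;> simp_all
  · intro h
    have e : ∀ i j, ((γ i j : ℤ) : ZMod m) = (((1 : Matrix (Fin 2) (Fin 2) ℤ) i j : ℤ) : ZMod m) := by
      intro i j
      have := (ZMod.intCast_zmod_eq_zero_iff_dvd _ m).2 (h i j)
      push_cast at this ⊢
      linear_combination this
    refine ⟨?_, ?_, ?_, ?_⟩
    · have := e 0 0; simpa using this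
    · have := e 0 1; simpa using this
    · have := e 1 0; simpa using this
    · have := e 1 1; simpa using this

end HodgeAux

namespace HodgeAux

open Matrix.SpecialLinearGroup

/-- Upper unipotent. -/
def Tm (k : ℤ) : SL(2, ℤ) := ⟨!![1, k; 0, 1], by simp [Matrix.det_fin_two_of]⟩

/-- Lower unipotent. -/
def Lm (k : ℤ) : SL(2, ℤ) := ⟨!![1, 0; k, 1], by simp [Matrix.det_fin_two_of]⟩

/-- Mixed parabolic direction `1 + k·[[-1,1],[-1,1]]`. -/
def Um (k : ℤ) : SL(2, ℤ) := ⟨!![1 - k, k; -k, 1 + k], by simp [Matrix.det_fin_two_of]; ring⟩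

@[simp] theorem coe_Tm (k : ℤ) : (↑(Tm k) : Matrix (Fin 2) (Fin 2) ℤ) = !![1, k; 0, 1] := rfl
@[simp] theorem coe_Lm (k : ℤ) : (↑(Lm k) : Matrix (Fin 2) (Fin 2) ℤ) = !![1, 0; k, 1] := rfl
@[simp] theorem coe_Um (k : ℤ) :
    (↑(Um k) : Matrix (Fin 2) (Fin 2) ℤ) = !![1 - k, k; -k, 1 + k] := rfl

section Gen

variable (N₁ N₂ : ℕ)

/-- The intersection `Γ₁(N₁) ⊓ Γ(N₂)`. -/
abbrev GG : Subgroup SL(2, ℤ) := Gamma1 N₁ ⊓ Gamma N₂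

/-- Generating set: parabolic elements of `Γ` and squares of elements of `Γ`. -/
def Pset : Set SL(2, ℤ) :=
  {g | (g ∈ GG N₁ N₂ ∧ g ≠ 1 ∧
      (Matrix.trace ((g : SL(2, ℤ)) : Matrix (Fin 2) (Fin 2) ℤ) = 2 ∨
       Matrix.trace ((g : SL(2, ℤ)) : Matrix (Fin 2) (Fin 2) ℤ) = -2)) ∨
    (∃ γ ∈ GG N₁ N₂, g = γ * γ)}

/-- The subgroup generated by parabolics of `Γ` and squares of elements of `Γ`. -/
def P : Subgroup SL(2, ℤ) := Subgroup.closure (Pset N₁ N₂)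

theorem Pset_subset : Pset N₁ N₂ ⊆ (GG N₁ N₂ : Set SL(2, ℤ)) := by
  rintro g (⟨hg, -, -⟩ | ⟨γ, hγ, rfl⟩)
  · exact hg
  · exact mul_mem hγ hγ

theorem P_le : P N₁ N₂ ≤ GG N₁ N₂ :=
  (Subgroup.closure_le _).2 (Pset_subset N₁ N₂)

/-- Membership in `Γ` in terms of integer divisibility of entries. -/
theorem mem_GG_iff {γ : SL(2, ℤ)} :
    γ ∈ GG N₁ N₂ ↔
      ((N₁ : ℤ) ∣ (γ : Matrix (Fin 2) (Fin 2) ℤ) 0 0 - 1 ∧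
       (N₁ : ℤ) ∣ (γ : Matrix (Fin 2) (Fin 2) ℤ) 1 1 - 1 ∧
       (N₁ : ℤ) ∣ (γ : Matrix (Fin 2) (Fin 2) ℤ) 1 0) ∧
      ModC N₂ (↑γ : Matrix (Fin 2) (Fin 2) ℤ) 1 := by
  rw [Subgroup.mem_inf, Gamma1_mem, mem_Gamma_iff]
  constructor
  · rintro ⟨⟨ha, hd, hc⟩, h2⟩
    refine ⟨⟨?_, ?_, ?_⟩, h2⟩
    · rw [← ZMod.intCast_zmod_eq_zero_iff_dvd]; push_cast; rw [ha]; ring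
    · rw [← ZMod.intCast_zmod_eq_zero_iff_dvd]; push_cast; rw [hd]; ring
    · rw [← ZMod.intCast_zmod_eq_zero_iff_dvd]; push_cast; rw [hc]
  · rintro ⟨⟨ha, hd, hc⟩, h2⟩
    refine ⟨⟨?_, ?_, ?_⟩, h2⟩
    · have := (ZMod.intCast_zmod_eq_zero_iff_dvd _ N₁).2 ha; push_cast at this; linear_combination this
    · have := (ZMod.intCast_zmod_eq_zero_iff_dvd _ N₁).2 hd; push_cast at this; linear_combination this
    · have := (ZMod.intCast_zmod_eq_zero_iff_dvd _ N₁).2 hc; push_cast at this; linear_combination this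

theorem Tm_mem_GG {k : ℤ} (hk : (N₂ : ℤ) ∣ k) : Tm k ∈ GG N₁ N₂ := by
  rw [mem_GG_iff]
  refine ⟨⟨?_, ?_, ?_⟩, ?_⟩ <;> try (simp [Tm])
  intro i j; fin_cases i <;> fin_cases j <;> simp [Tm, Matrix.one_apply] <;> exact hk

theorem Lm_mem_GG {k : ℤ} (hk1 : (N₁ : ℤ) ∣ k) (hk2 : (N₂ : ℤ) ∣ k) : Lm k ∈ GG N₁ N₂ := by
  rw [mem_GG_iff]
  refine ⟨⟨?_, ?_, ?_⟩, ?_⟩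
  · simp [Lm]
  · simp [Lm]
  · simpa [Lm] using hk1
  · intro i j; fin_cases i <;> fin_cases j <;> simp [Lm, Matrix.one_apply] <;> exact hk2

theorem Um_mem_GG {k : ℤ} (hk1 : (N₁ : ℤ) ∣ k) (hk2 : (N₂ : ℤ) ∣ k) : Um k ∈ GG N₁ N₂ := by
  rw [mem_GG_iff]
  refine ⟨⟨?_, ?_, ?_⟩, ?_⟩
  · simpa [Um] using hk1.neg_right
  · simpa [Um] using hk1
  · simpa [Um] using hk1.neg_right
  · intro i j; fin_cases i <;> fin_cases j <;> simp [Um, Matrix.one_apply, dvd_neg] <;>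
      exact hk2

theorem Tm_mem_P {k : ℤ} (hk : (N₂ : ℤ) ∣ k) : Tm k ∈ P N₁ N₂ := by
  rcases eq_or_ne k 0 with rfl | hne
  · have : Tm 0 = 1 := by ext i j; fin_cases i <;> fin_cases j <;> simp [Tm, Matrix.one_apply]
    rw [this]; exact one_mem _
  · apply Subgroup.subset_closure
    left
    refine ⟨Tm_mem_GG N₁ N₂ hk, ?_, Or.inl ?_⟩
    · intro h
      have := congrArg (fun g : SL(2, ℤ) => (↑g : Matrix (Fin 2) (Fin 2) ℤ) 0 1) h
      simp [Tm, Matrix.one_apply] at this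
      exact hne this
    · simp [Tm, Matrix.trace_fin_two]

theorem Lm_mem_P {k : ℤ} (hk1 : (N₁ : ℤ) ∣ k) (hk2 : (N₂ : ℤ) ∣ k) : Lm k ∈ P N₁ N₂ := by
  rcases eq_or_ne k 0 with rfl | hne
  · have : Lm 0 = 1 := by ext i j; fin_cases i <;> fin_cases j <;> simp [Lm, Matrix.one_apply]
    rw [this]; exact one_mem _
  · apply Subgroup.subset_closure
    left
    refine ⟨Lm_mem_GG N₁ N₂ hk1 hk2, ?_, Or.inl ?_⟩
    · intro h
      have := congrArg (fun g : SL(2, ℤ) => (↑g : Matrix (Fin 2) (Fin 2) ℤ) 1 0) h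
      simp [Lm, Matrix.one_apply] at this
      exact hne this
    · simp [Lm, Matrix.trace_fin_two]

theorem Um_mem_P {k : ℤ} (hk1 : (N₁ : ℤ) ∣ k) (hk2 : (N₂ : ℤ) ∣ k) : Um k ∈ P N₁ N₂ := by
  rcases eq_or_ne k 0 with rfl | hne
  · have : Um 0 = 1 := by ext i j; fin_cases i <;> fin_cases j <;> simp [Um, Matrix.one_apply]
    rw [this]; exact one_mem _
  · apply Subgroup.subset_closure
    left
    refine ⟨Um_mem_GG N₁ N₂ hk1 hk2, ?_, Or.inl ?_⟩
    · intro h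
      have := congrArg (fun g : SL(2, ℤ) => (↑g : Matrix (Fin 2) (Fin 2) ℤ) 0 1) h
      simp [Um, Matrix.one_apply] at this
      exact hne this
    · simp [Um, Matrix.trace_fin_two]

theorem sq_mem_P {γ : SL(2, ℤ)} (hγ : γ ∈ GG N₁ N₂) : γ * γ ∈ P N₁ N₂ :=
  Subgroup.subset_closure (Or.inr ⟨γ, hγ, rfl⟩)

end Gen
end HodgeAux

namespace HodgeAux

theorem Tm_mul_coe (k : ℤ) (g : Matrix (Fin 2) (Fin 2) ℤ) :
    !![1, k; 0, 1] * g =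
      !![g 0 0 + k * g 1 0, g 0 1 + k * g 1 1; g 1 0, g 1 1] := by
  ext i j; fin_cases i <;> fin_cases j <;> simp [Matrix.mul_apply, Fin.sum_univ_two]

theorem Lm_mul_coe (k : ℤ) (g : Matrix (Fin 2) (Fin 2) ℤ) :
    !![1, 0; k, 1] * g =
      !![g 0 0, g 0 1; g 1 0 + k * g 0 0, g 1 1 + k * g 0 1] := by
  ext i j; fin_cases i <;> fin_cases j <;> simp [Matrix.mul_apply, Fin.sum_univ_two] <;> ring

/-- Solve `u * t ≡ b (mod p)` when `p ∤ u`. -/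
theorem exists_mul_cong {p : ℕ} (hp : p.Prime) {u : ℤ} (hu : ¬(p : ℤ) ∣ u) (b : ℤ) :
    ∃ t : ℤ, (p : ℤ) ∣ u * t - b := by
  have hpp : Prime (p : ℤ) := Nat.prime_iff_prime_int.1 hp
  have hcop : IsCoprime (p : ℤ) u := hpp.coprime_iff_not_dvd.2 hu
  obtain ⟨x, y, hxy⟩ := hcop
  refine ⟨y * b, ⟨-(x * b), ?_⟩⟩
  linear_combination b * hxy

end HodgeAux

namespace HodgeAux

theorem prime_int_not_dvd_one {p : ℕ} (hp : p.Prime) : ¬ (p : ℤ) ∣ 1 := by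
  intro h
  have h1 : (p : ℤ) ≤ 1 := Int.le_of_dvd one_pos h
  have h2 := hp.two_le
  omega

theorem reduce_aux {p : ℕ} (hp : p.Prime) {u v : ℤ} (hu : ¬(p : ℤ) ∣ u) (hv : ¬(p : ℤ) ∣ v)
    (g : SL(2, ℤ)) (hc : ¬(p : ℤ) ∣ (↑g : Matrix (Fin 2) (Fin 2) ℤ) 1 0) :
    ∃ t₁ t₂ t₃ : ℤ,
      ModC p (↑(Tm (u * t₃) * (Lm (v * t₂) * (Tm (u * t₁) * g))) : Matrix (Fin 2) (Fin 2) ℤ) 1 := by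
  set a := (↑g : Matrix (Fin 2) (Fin 2) ℤ) 0 0 with ha
  set b := (↑g : Matrix (Fin 2) (Fin 2) ℤ) 0 1 with hb
  set c := (↑g : Matrix (Fin 2) (Fin 2) ℤ) 1 0 with hcc
  set d := (↑g : Matrix (Fin 2) (Fin 2) ℤ) 1 1 with hd
  have hdet : a * d - b * c = 1 := by
    have := g.prop
    rw [Matrix.det_fin_two] at this
    exact this
  have huc : ¬ (p : ℤ) ∣ u * c := fun h => (Int.Prime.dvd_mul' hp h).elim hu hc
  obtain ⟨t₁, ht₁⟩ := exists_mul_cong hp huc (1 - a)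
  set a1 := a + u * t₁ * c with ha1
  set b1 := b + u * t₁ * d with hb1
  have ha1p : (p : ℤ) ∣ a1 - 1 := by
    have e : a1 - 1 = u * c * t₁ - (1 - a) := by rw [ha1]; ring
    rw [e]; exact ht₁
  have ha1nd : ¬ (p : ℤ) ∣ a1 := by
    intro h
    exact prime_int_not_dvd_one hp (by simpa using dvd_sub h ha1p)
  have hva1 : ¬ (p : ℤ) ∣ v * a1 := fun h => (Int.Prime.dvd_mul' hp h).elim hv ha1nd
  obtain ⟨t₂, ht₂⟩ := exists_mul_cong hp hva1 (-c)
  set c2 := c + v * t₂ * a1 with hc2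
  set d2 := d + v * t₂ * b1 with hd2
  have hc2p : (p : ℤ) ∣ c2 := by
    have e : c2 = v * a1 * t₂ - (-c) := by rw [hc2]; ring
    rw [e]; exact ht₂
  have hdet2 : a1 * d2 - b1 * c2 = 1 := by
    rw [ha1, hb1, hc2, hd2, ha1]
    linear_combination hdet
  have hd2p : (p : ℤ) ∣ d2 - 1 := by
    have e : d2 - 1 = (1 - a1) * d2 + b1 * c2 := by linear_combination hdet2
    rw [e]
    have h1 : (p : ℤ) ∣ (1 - a1) := by
      have : (1 - a1) = -(a1 - 1) := by ring
      rw [this]; exact ha1p.neg_right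
    exact dvd_add (h1.mul_right d2) (hc2p.mul_left b1)
  have hd2nd : ¬ (p : ℤ) ∣ d2 := by
    intro h
    exact prime_int_not_dvd_one hp (by simpa using dvd_sub h hd2p)
  have hud2 : ¬ (p : ℤ) ∣ u * d2 := fun h => (Int.Prime.dvd_mul' hp h).elim hu hd2nd
  obtain ⟨t₃, ht₃⟩ := exists_mul_cong hp hud2 (-b1)
  refine ⟨t₁, t₂, t₃, ?_⟩
  have hg₁ : (↑(Tm (u * t₁) * g) : Matrix (Fin 2) (Fin 2) ℤ) = !![a1, b1; c, d] := by
    rw [Matrix.SpecialLinearGroup.coe_mul, coe_Tm, Tm_mul_coe, ← ha, ← hb, ← hcc, ← hd,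
      ← ha1, ← hb1]
  have hg₂ : (↑(Lm (v * t₂) * (Tm (u * t₁) * g)) : Matrix (Fin 2) (Fin 2) ℤ)
      = !![a1, b1; c2, d2] := by
    rw [Matrix.SpecialLinearGroup.coe_mul, coe_Lm, hg₁, Lm_mul_coe]
    congr 1 <;> simp [hc2, hd2]
  have hg₃ : (↑(Tm (u * t₃) * (Lm (v * t₂) * (Tm (u * t₁) * g))) : Matrix (Fin 2) (Fin 2) ℤ)
      = !![a1 + u * t₃ * c2, b1 + u * t₃ * d2; c2, d2] := by
    rw [Matrix.SpecialLinearGroup.coe_mul, coe_Tm, hg₂, Tm_mul_coe]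
    congr 1 <;> simp [mul_assoc]
  intro i j
  rw [hg₃]
  fin_cases i <;> fin_cases j <;> simp [Matrix.one_apply]
  · have e : a1 + u * t₃ * c2 - 1 = (a1 - 1) + u * t₃ * c2 := by ring
    rw [e]; exact dvd_add ha1p (hc2p.mul_left _)
  · have e : b1 + u * t₃ * d2 = u * d2 * t₃ - (-b1) := by ring
    rw [e]; exact ht₃
  · exact hc2p
  · exact hd2p

end HodgeAux

namespace HodgeAux

theorem Tm_zero : Tm 0 = 1 := by
  ext i j; fin_cases i <;> fin_cases j <;> simp [Tm, Matrix.one_apply]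

theorem Lm_zero : Lm 0 = 1 := by
  ext i j; fin_cases i <;> fin_cases j <;> simp [Lm, Matrix.one_apply]

theorem ModC.mul_one' {m : ℕ} {A B : Matrix (Fin 2) (Fin 2) ℤ}
    (h1 : ModC m A 1) (h2 : ModC m B 1) : ModC m (A * B) 1 := by
  have := ModC.mul h1 h2
  rwa [one_mul] at this

theorem ModC_Tm {m : ℕ} {k : ℤ} (hk : (m : ℤ) ∣ k) :
    ModC m (↑(Tm k) : Matrix (Fin 2) (Fin 2) ℤ) 1 := by
  intro i j; fin_cases i <;> fin_cases j <;> simp [Tm, Matrix.one_apply] <;> exact hk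

theorem ModC_Lm {m : ℕ} {k : ℤ} (hk : (m : ℤ) ∣ k) :
    ModC m (↑(Lm k) : Matrix (Fin 2) (Fin 2) ℤ) 1 := by
  intro i j; fin_cases i <;> fin_cases j <;> simp [Lm, Matrix.one_apply] <;> exact hk

theorem row_reduce {p : ℕ} (hp : p.Prime) {u v : ℤ} (hu : ¬(p : ℤ) ∣ u) (hv : ¬(p : ℤ) ∣ v)
    (g : SL(2, ℤ)) :
    ∃ t₀ t₁ t₂ t₃ : ℤ,
      ModC p (↑(Tm (u * t₃) * (Lm (v * t₂) * (Tm (u * t₁) * (Lm (v * t₀) * g))))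
        : Matrix (Fin 2) (Fin 2) ℤ) 1 := by
  by_cases hc : (p : ℤ) ∣ (↑g : Matrix (Fin 2) (Fin 2) ℤ) 1 0
  · by_cases ha : (p : ℤ) ∣ (↑g : Matrix (Fin 2) (Fin 2) ℤ) 0 0
    · exfalso
      have hdet : (↑g : Matrix (Fin 2) (Fin 2) ℤ) 0 0 * (↑g : Matrix (Fin 2) (Fin 2) ℤ) 1 1
          - (↑g : Matrix (Fin 2) (Fin 2) ℤ) 0 1 * (↑g : Matrix (Fin 2) (Fin 2) ℤ) 1 0 = 1 := by
        have := g.prop; rwa [Matrix.det_fin_two] at this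
      apply prime_int_not_dvd_one hp
      rw [← hdet]
      exact dvd_sub (ha.mul_right _) (hc.mul_left _)
    · -- premultiply by Lm (v*1)
      have hc' : ¬ (p : ℤ) ∣ (↑(Lm (v * 1) * g) : Matrix (Fin 2) (Fin 2) ℤ) 1 0 := by
        rw [Matrix.SpecialLinearGroup.coe_mul, coe_Lm, Lm_mul_coe]
        simp only [mul_one]
        intro hdvd
        have : (p : ℤ) ∣ v * (↑g : Matrix (Fin 2) (Fin 2) ℤ) 0 0 := by
          have e : v * (↑g : Matrix (Fin 2) (Fin 2) ℤ) 0 0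
              = ((↑g : Matrix (Fin 2) (Fin 2) ℤ) 1 0 + v * (↑g : Matrix (Fin 2) (Fin 2) ℤ) 0 0)
                - (↑g : Matrix (Fin 2) (Fin 2) ℤ) 1 0 := by ring
          rw [e]
          exact dvd_sub (by simpa using hdvd) hc
        exact (Int.Prime.dvd_mul' hp this).elim hv ha
      obtain ⟨t₁, t₂, t₃, hmod⟩ := reduce_aux hp hu hv (Lm (v * 1) * g) hc'
      exact ⟨1, t₁, t₂, t₃, hmod⟩
  · obtain ⟨t₁, t₂, t₃, hmod⟩ := reduce_aux hp hu hv g hc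
    refine ⟨0, t₁, t₂, t₃, ?_⟩
    rw [mul_zero, Lm_zero, one_mul]
    exact hmod

end HodgeAux

namespace HodgeAux

variable {N₁ N₂ : ℕ}

theorem GG_entries {h : SL(2, ℤ)} (hh : h ∈ GG N₁ N₂) :
    ((N₁ : ℤ) ∣ (↑h : Matrix (Fin 2) (Fin 2) ℤ) 0 0 - 1 ∧
     (N₁ : ℤ) ∣ (↑h : Matrix (Fin 2) (Fin 2) ℤ) 1 1 - 1 ∧
     (N₁ : ℤ) ∣ (↑h : Matrix (Fin 2) (Fin 2) ℤ) 1 0) ∧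
    ModC N₂ (↑h : Matrix (Fin 2) (Fin 2) ℤ) 1 :=
  (mem_GG_iff N₁ N₂).1 hh

/-- Fresh prime dividing `N₂`. -/
theorem step_SA {m p : ℕ} (hp : p.Prime) (hpN₂ : p ∣ N₂) (hpm : ¬ p ∣ m)
    {h : SL(2, ℤ)} (hh : h ∈ GG N₁ N₂) (hm : ModC m (↑h : Matrix (Fin 2) (Fin 2) ℤ) 1) :
    ∃ q ∈ P N₁ N₂, ModC (m * p) (↑(q⁻¹ * h) : Matrix (Fin 2) (Fin 2) ℤ) 1 := by
  refine ⟨1, one_mem _, ?_⟩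
  rw [inv_one, one_mul]
  have hcop : Nat.Coprime m p := ((Nat.Prime.coprime_iff_not_dvd hp).2 hpm).symm
  exact ModC.combine hcop hm (ModC.of_dvd hpN₂ (GG_entries hh).2)

/-- Fresh prime dividing `N₁` but not `N₂`. -/
theorem step_SB {m p : ℕ} (hp : p.Prime) (hpN₁ : p ∣ N₁) (hpN₂ : ¬ p ∣ N₂) (hpm : ¬ p ∣ m)
    {h : SL(2, ℤ)} (hh : h ∈ GG N₁ N₂) (hm : ModC m (↑h : Matrix (Fin 2) (Fin 2) ℤ) 1) :
    ∃ q ∈ P N₁ N₂, ModC (m * p) (↑(q⁻¹ * h) : Matrix (Fin 2) (Fin 2) ℤ) 1 := by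
  have hu : ¬ (p : ℤ) ∣ ((m : ℤ) * N₂) := by
    intro hdvd
    rcases Int.Prime.dvd_mul' hp hdvd with h1 | h1
    · exact hpm (Int.natCast_dvd_natCast.1 h1)
    · exact hpN₂ (Int.natCast_dvd_natCast.1 h1)
  obtain ⟨t, ht⟩ := exists_mul_cong hp hu ((↑h : Matrix (Fin 2) (Fin 2) ℤ) 0 1)
  set k : ℤ := (m : ℤ) * N₂ * t with hk
  refine ⟨Tm k, Tm_mem_P N₁ N₂ ⟨(m : ℤ) * t, by rw [hk]; ring⟩, ?_⟩
  apply ModC.inv_mul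
  obtain ⟨⟨e00, e11, e10⟩, hmod2⟩ := GG_entries hh
  have hpdvd : ∀ x : ℤ, (N₁ : ℤ) ∣ x → (p : ℤ) ∣ x :=
    fun x hx => dvd_trans (Int.natCast_dvd_natCast.2 hpN₁) hx
  have hq1 : ModC p (↑(Tm k) : Matrix (Fin 2) (Fin 2) ℤ) ↑h := by
    intro i j
    fin_cases i <;> fin_cases j <;> simp [Tm]
    · rw [← dvd_neg]; simpa using hpdvd _ e00
    · exact ht
    · rw [← dvd_neg]; simpa using hpdvd _ e10
    · rw [← dvd_neg]; simpa using hpdvd _ e11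
  have hq2 : ModC m (↑(Tm k) : Matrix (Fin 2) (Fin 2) ℤ) ↑h := by
    intro i j
    have h1 := ModC_Tm (m := m) (k := k) ⟨(N₂ : ℤ) * t, by rw [hk]; ring⟩ i j
    have h2 := hm i j
    have e : (↑(Tm k) : Matrix (Fin 2) (Fin 2) ℤ) i j - (↑h : Matrix (Fin 2) (Fin 2) ℤ) i j
        = ((↑(Tm k) : Matrix (Fin 2) (Fin 2) ℤ) i j - (1 : Matrix (Fin 2) (Fin 2) ℤ) i j)
          - ((↑h : Matrix (Fin 2) (Fin 2) ℤ) i j - (1 : Matrix (Fin 2) (Fin 2) ℤ) i j) := by ring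
    rw [e]; exact dvd_sub h1 h2
  have hcop : Nat.Coprime m p := ((Nat.Prime.coprime_iff_not_dvd hp).2 hpm).symm
  exact ModC.combine hcop hq2 hq1

/-- Fresh prime dividing neither `N₁` nor `N₂`. -/
theorem step_SC {m p : ℕ} (hp : p.Prime) (hpN₁ : ¬ p ∣ N₁) (hpN₂ : ¬ p ∣ N₂) (hpm : ¬ p ∣ m)
    {h : SL(2, ℤ)} (hh : h ∈ GG N₁ N₂) (hm : ModC m (↑h : Matrix (Fin 2) (Fin 2) ℤ) 1) :
    ∃ q ∈ P N₁ N₂, ModC (m * p) (↑(q⁻¹ * h) : Matrix (Fin 2) (Fin 2) ℤ) 1 := by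
  have hcast : ∀ {a : ℕ}, ¬ p ∣ a → ¬ (p : ℤ) ∣ (a : ℤ) :=
    fun {a} hna hdvd => hna (Int.natCast_dvd_natCast.1 hdvd)
  have hu : ¬ (p : ℤ) ∣ ((m : ℤ) * N₂) := by
    intro hdvd
    rcases Int.Prime.dvd_mul' hp hdvd with h1 | h1
    · exact hcast hpm h1
    · exact hcast hpN₂ h1
  have hv : ¬ (p : ℤ) ∣ ((m : ℤ) * (N₁ * N₂)) := by
    intro hdvd
    rcases Int.Prime.dvd_mul' hp hdvd with h1 | h1
    · exact hcast hpm h1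
    rcases Int.Prime.dvd_mul' hp h1 with h2 | h2
    · exact hcast hpN₁ h2
    · exact hcast hpN₂ h2
  obtain ⟨t₀, t₁, t₂, t₃, hmod⟩ := row_reduce hp hu hv h
  set u : ℤ := (m : ℤ) * N₂ with hudef
  set v : ℤ := (m : ℤ) * (N₁ * N₂) with hvdef
  set w : SL(2, ℤ) := Tm (u * t₃) * (Lm (v * t₂) * (Tm (u * t₁) * Lm (v * t₀))) with hw
  have hwP : w ∈ P N₁ N₂ := by
    refine mul_mem (Tm_mem_P N₁ N₂ ⟨(m : ℤ) * t₃, by rw [hudef]; ring⟩)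
      (mul_mem (Lm_mem_P N₁ N₂ ⟨(m : ℤ) * (N₂ : ℤ) * t₂, by rw [hvdef]; push_cast; ring⟩
          ⟨(m : ℤ) * (N₁ : ℤ) * t₂, by rw [hvdef]; push_cast; ring⟩)
        (mul_mem (Tm_mem_P N₁ N₂ ⟨(m : ℤ) * t₁, by rw [hudef]; ring⟩)
          (Lm_mem_P N₁ N₂ ⟨(m : ℤ) * (N₂ : ℤ) * t₀, by rw [hvdef]; push_cast; ring⟩
            ⟨(m : ℤ) * (N₁ : ℤ) * t₀, by rw [hvdef]; push_cast; ring⟩)))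
  refine ⟨w⁻¹, inv_mem hwP, ?_⟩
  rw [inv_inv]
  have hass : w * h = Tm (u * t₃) * (Lm (v * t₂) * (Tm (u * t₁) * (Lm (v * t₀) * h))) := by
    rw [hw]; group
  have hmodp : ModC p (↑(w * h) : Matrix (Fin 2) (Fin 2) ℤ) 1 := by
    rw [hass]; exact hmod
  have hmodm : ModC m (↑(w * h) : Matrix (Fin 2) (Fin 2) ℤ) 1 := by
    rw [Matrix.SpecialLinearGroup.coe_mul]
    apply ModC.mul_one' _ hm
    rw [hw]
    simp only [Matrix.SpecialLinearGroup.coe_mul]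
    apply ModC.mul_one' (ModC_Tm ⟨(N₂ : ℤ) * t₃, by rw [hudef]; ring⟩)
    apply ModC.mul_one' (ModC_Lm ⟨(N₁ : ℤ) * N₂ * t₂, by rw [hvdef]; push_cast; ring⟩)
    exact ModC.mul_one' (ModC_Tm ⟨(N₂ : ℤ) * t₁, by rw [hudef]; ring⟩)
      (ModC_Lm ⟨(N₁ : ℤ) * N₂ * t₀, by rw [hvdef]; push_cast; ring⟩)
  have hcop : Nat.Coprime m p := ((Nat.Prime.coprime_iff_not_dvd hp).2 hpm).symm
  exact ModC.combine hcop hmodm hmodp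

end HodgeAux

namespace HodgeAux

theorem pow_structure (B : Matrix (Fin 2) (Fin 2) ℤ) (j : ℕ) :
    ∃ Y : Matrix (Fin 2) (Fin 2) ℤ, (1 + B) ^ j = 1 + (j : ℤ) • B + B * B * Y := by
  induction j with
  | zero => exact ⟨0, by simp⟩
  | succ j ih =>
    obtain ⟨Y, hY⟩ := ih
    refine ⟨Y + (j : ℤ) • 1 + Y * B, ?_⟩
    rw [pow_succ, hY]
    push_cast
    rw [add_smul, one_smul]
    simp only [mul_add, add_mul, one_mul, mul_one, smul_mul_assoc, mul_smul_comm, mul_assoc]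
    abel

theorem dvd_entries_mul {d : ℤ} {X : Matrix (Fin 2) (Fin 2) ℤ}
    (hX : ∀ i j, d ∣ X i j) (Z : Matrix (Fin 2) (Fin 2) ℤ) :
    ∀ i j, d ∣ (X * Z) i j := by
  intro i j
  have e : (X * Z) i j = X i 0 * Z 0 j + X i 1 * Z 1 j := by
    simp [Matrix.mul_apply, Fin.sum_univ_two]
  rw [e]
  exact dvd_add ((hX i 0).mul_right _) ((hX i 1).mul_right _)

theorem pow_cong {m p : ℕ} (hpm : p ∣ m) {A : Matrix (Fin 2) (Fin 2) ℤ}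
    (hA : ModC m A 1) : ModC (m * p) (A ^ p) 1 := by
  set B := A - 1 with hB
  have hBd : ∀ i j, (m : ℤ) ∣ B i j := by
    intro i j
    have := hA i j
    simpa [hB] using this
  have hA' : A = 1 + B := by rw [hB]; abel
  obtain ⟨Y, hY⟩ := pow_structure B p
  intro i j
  have hent := congrArg (fun M : Matrix (Fin 2) (Fin 2) ℤ => M i j) hY
  simp only [Matrix.add_apply, Matrix.smul_apply, smul_eq_mul] at hent
  rw [hA', hent]
  have e : (1 : Matrix (Fin 2) (Fin 2) ℤ) i j + (p : ℤ) * B i j + (B * B * Y) i j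
      - (1 : Matrix (Fin 2) (Fin 2) ℤ) i j
      = (p : ℤ) * B i j + (B * B * Y) i j := by ring
  rw [e]
  apply dvd_add
  · obtain ⟨c, hc⟩ := hBd i j
    exact ⟨c, by rw [hc]; push_cast; ring⟩
  · have h2 : ∀ i j, ((m : ℤ) * m) ∣ (B * B) i j := by
      intro i j
      have e2 : (B * B) i j = B i 0 * B 0 j + B i 1 * B 1 j := by
        simp [Matrix.mul_apply, Fin.sum_univ_two]
      rw [e2]
      exact dvd_add (mul_dvd_mul (hBd i 0) (hBd 0 j)) (mul_dvd_mul (hBd i 1) (hBd 1 j))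
    have h3 := dvd_entries_mul h2 Y i j
    exact dvd_trans (mul_dvd_mul_left (m : ℤ) (Int.natCast_dvd_natCast.2 hpm)) h3

/-- Repeated odd prime: the square trick. -/
theorem step_SD {m p : ℕ} (hpodd : Odd p) (hpm : p ∣ m)
    {h : SL(2, ℤ)} (hh : h ∈ GG N₁ N₂) (hm : ModC m (↑h : Matrix (Fin 2) (Fin 2) ℤ) 1) :
    ∃ q ∈ P N₁ N₂, ModC (m * p) (↑(q⁻¹ * h) : Matrix (Fin 2) (Fin 2) ℤ) 1 := by
  obtain ⟨r, hr⟩ := hpodd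
  set γ : SL(2, ℤ) := (h⁻¹) ^ r with hγ
  refine ⟨γ * γ, sq_mem_P N₁ N₂ (pow_mem (inv_mem hh) r), ?_⟩
  have hq : (γ * γ)⁻¹ * h = h ^ p := by
    rw [hγ, hr]
    rw [← pow_add]
    group
  rw [hq, Matrix.SpecialLinearGroup.coe_pow]
  exact pow_cong hpm hm

end HodgeAux

namespace HodgeAux

theorem Um_mul_coe (k : ℤ) (g : Matrix (Fin 2) (Fin 2) ℤ) :
    !![1 - k, k; -k, 1 + k] * g =
      !![(1 - k) * g 0 0 + k * g 1 0, (1 - k) * g 0 1 + k * g 1 1;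
         -k * g 0 0 + (1 + k) * g 1 0, -k * g 0 1 + (1 + k) * g 1 1] := by
  ext i j; fin_cases i <;> fin_cases j <;> simp [Matrix.mul_apply, Fin.sum_univ_two]

/-- If `2^(i+1) ∣ K` where `i = v₂(m)`, entries divisible by `m` and `K` are divisible
by `2m`. -/
theorem dvd_upgrade {m K : ℕ} (hm0 : m ≠ 0)
    (hK : 2 ^ (m.factorization 2 + 1) ∣ K) {e : ℤ}
    (h1 : (m : ℤ) ∣ e) (h2 : (K : ℤ) ∣ e) : ((m * 2 : ℕ) : ℤ) ∣ e := by
  set i := m.factorization 2 with hi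
  have hsplit : 2 ^ i * ordCompl[2] m = m := Nat.ordProj_mul_ordCompl_eq_self m 2
  have hcop : Nat.Coprime (2 ^ (i + 1)) (ordCompl[2] m) :=
    Nat.Coprime.pow_left _ (Nat.coprime_ordCompl Nat.prime_two hm0)
  have hcopz : IsCoprime ((2 ^ (i + 1) : ℕ) : ℤ) ((ordCompl[2] m : ℕ) : ℤ) :=
    Nat.isCoprime_iff_coprime.2 hcop
  have hd1 : ((2 ^ (i + 1) : ℕ) : ℤ) ∣ e :=
    dvd_trans (Int.natCast_dvd_natCast.2 hK) h2
  have hd2 : ((ordCompl[2] m : ℕ) : ℤ) ∣ e :=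
    dvd_trans (Int.natCast_dvd_natCast.2 (Nat.ordCompl_dvd m 2)) h1
  have := hcopz.mul_dvd hd1 hd2
  have heq : (2 ^ (i + 1) : ℕ) * ordCompl[2] m = m * 2 := by
    rw [pow_succ]
    calc 2 ^ i * 2 * ordCompl[2] m = 2 ^ i * ordCompl[2] m * 2 := by ring
    _ = m * 2 := by rw [hsplit]
  rw [← heq]
  exact_mod_cast this

theorem two_pow_succ_dvd {m n' : ℕ} (hm0 : m ≠ 0) (h1 : ordCompl[2] n' ∣ m)
    (h2 : ¬ n' ∣ m) : m.factorization 2 + 1 ≤ n'.factorization 2 := by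
  by_contra hcon
  push_neg at hcon
  have hle : n'.factorization 2 ≤ m.factorization 2 := by omega
  have hn0 : n' ≠ 0 := by
    intro h
    rw [h] at h1
    simp at h1
    omega
  have hpd : 2 ^ (n'.factorization 2) ∣ m :=
    dvd_trans (pow_dvd_pow 2 hle) (Nat.ordProj_dvd m 2)
  have hcop : Nat.Coprime (2 ^ (n'.factorization 2)) (ordCompl[2] n') :=
    Nat.Coprime.pow_left _ (Nat.coprime_ordCompl Nat.prime_two hn0)
  have : n' ∣ m := by
    rw [← Nat.ordProj_mul_ordCompl_eq_self n' 2]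
    exact hcop.mul_dvd_of_dvd_of_dvd hpd h1
  exact h2 this

theorem odd_dvd_ordCompl {d n' : ℕ} (hd : ¬ 2 ∣ d) (hdn : d ∣ n') : d ∣ ordCompl[2] n' := by
  rcases eq_or_ne n' 0 with rfl | hn0
  · simp
  have hcop : Nat.Coprime d (2 ^ (n'.factorization 2)) :=
    Nat.Coprime.pow_right _ ((Nat.coprime_comm).1 (Nat.prime_two.coprime_iff_not_dvd.2 hd))
  have hd2 : d ∣ ordCompl[2] n' * 2 ^ (n'.factorization 2) := by
    rw [mul_comm, Nat.ordProj_mul_ordCompl_eq_self]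
    exact hdn
  exact hcop.dvd_of_dvd_mul_right hd2

end HodgeAux


namespace HodgeAux

variable {N₁ N₂ : ℕ}

/-- Repeated prime `2`. -/
theorem step_SE (hN₁ : 0 < N₁) (hN₂ : 0 < N₂) (hodd : Odd (N₁.gcd N₂))
    {m : ℕ} (hm0 : 0 < m) (hm2 : 2 ∣ m)
    (hon : ordCompl[2] (N₁.lcm N₂) ∣ m)
    {h : SL(2, ℤ)} (hh : h ∈ GG N₁ N₂) (hm : ModC m (↑h : Matrix (Fin 2) (Fin 2) ℤ) 1) :
    ∃ q ∈ P N₁ N₂, ModC (m * 2) (↑(q⁻¹ * h) : Matrix (Fin 2) (Fin 2) ℤ) 1 := by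
  obtain ⟨⟨e00, e11, e10⟩, hmod2⟩ := GG_entries hh
  have k00 : (m : ℤ) ∣ (↑h : Matrix (Fin 2) (Fin 2) ℤ) 0 0 - 1 := by simpa using hm 0 0
  have k01 : (m : ℤ) ∣ (↑h : Matrix (Fin 2) (Fin 2) ℤ) 0 1 := by simpa using hm 0 1
  have k10 : (m : ℤ) ∣ (↑h : Matrix (Fin 2) (Fin 2) ℤ) 1 0 := by simpa using hm 1 0
  have k11 : (m : ℤ) ∣ (↑h : Matrix (Fin 2) (Fin 2) ℤ) 1 1 - 1 := by simpa using hm 1 1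
  have h2m : (2 : ℤ) ∣ (m : ℤ) := by exact_mod_cast Int.natCast_dvd_natCast.2 hm2
  by_cases hnm : N₁.lcm N₂ ∣ m
  · -- Case (i): all three parabolic directions available.
    obtain ⟨x, hx⟩ := k00
    obtain ⟨y, hy⟩ := k01
    obtain ⟨z, hz⟩ := k10
    obtain ⟨w, hw⟩ := k11
    have hx' : (↑h : Matrix (Fin 2) (Fin 2) ℤ) 0 0 = 1 + (m : ℤ) * x := by linear_combination hx
    have hw' : (↑h : Matrix (Fin 2) (Fin 2) ℤ) 1 1 = 1 + (m : ℤ) * w := by linear_combination hw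
    have hdet : (↑h : Matrix (Fin 2) (Fin 2) ℤ) 0 0 * (↑h : Matrix (Fin 2) (Fin 2) ℤ) 1 1
        - (↑h : Matrix (Fin 2) (Fin 2) ℤ) 0 1 * (↑h : Matrix (Fin 2) (Fin 2) ℤ) 1 0 = 1 := by
      have := h.prop; rwa [Matrix.det_fin_two] at this
    have hkey : (m : ℤ) * (x + w + m * (x * w - y * z)) = 0 := by
      rw [hx', hy, hz, hw'] at hdet
      linear_combination hdet
    have hme : (m : ℤ) ≠ 0 := by
      simp only [ne_eq, Nat.cast_eq_zero]
      omega
    have htr : x + w = -((m : ℤ) * (x * w - y * z)) := by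
      rcases mul_eq_zero.1 hkey with h' | h'
      · exact absurd h' hme
      · linarith
    have htr2 : (2 : ℤ) ∣ x + w := by
      rw [htr]
      exact (h2m.mul_right _).neg_right
    have hN1m : (N₁ : ℤ) ∣ (m : ℤ) :=
      Int.natCast_dvd_natCast.2 (dvd_trans (Nat.dvd_lcm_left _ _) hnm)
    have hN2m : (N₂ : ℤ) ∣ (m : ℤ) :=
      Int.natCast_dvd_natCast.2 (dvd_trans (Nat.dvd_lcm_right _ _) hnm)
    set q : SL(2, ℤ) := Um ((m : ℤ) * x) * (Tm ((m : ℤ) * (y - x)) * Lm ((m : ℤ) * (z + x)))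
      with hqdef
    have hqP : q ∈ P N₁ N₂ :=
      mul_mem (Um_mem_P N₁ N₂ (hN1m.mul_right x) (hN2m.mul_right x))
        (mul_mem (Tm_mem_P N₁ N₂ (hN2m.mul_right _))
          (Lm_mem_P N₁ N₂ (hN1m.mul_right _) (hN2m.mul_right _)))
    refine ⟨q, hqP, ?_⟩
    apply ModC.inv_mul
    have hTL : (↑(Tm ((m : ℤ) * (y - x)) * Lm ((m : ℤ) * (z + x))) : Matrix (Fin 2) (Fin 2) ℤ)
        = !![1 + ((m : ℤ) * (y - x)) * ((m : ℤ) * (z + x)), (m : ℤ) * (y - x);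
             (m : ℤ) * (z + x), 1] := by
      ext i j
      rw [Matrix.SpecialLinearGroup.coe_mul, coe_Tm, coe_Lm]
      fin_cases i <;> fin_cases j <;>
        simp [Tm, Lm, Matrix.mul_apply, Fin.sum_univ_two] <;> ring
    have hq00 : (↑q : Matrix (Fin 2) (Fin 2) ℤ) 0 0
        = (1 - (m : ℤ) * x) * (1 + ((m : ℤ) * (y - x)) * ((m : ℤ) * (z + x)))
          + ((m : ℤ) * x) * ((m : ℤ) * (z + x)) := by
      rw [hqdef, Matrix.SpecialLinearGroup.coe_mul, coe_Um, hTL, Um_mul_coe]; simp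
    have hq01 : (↑q : Matrix (Fin 2) (Fin 2) ℤ) 0 1
        = (1 - (m : ℤ) * x) * ((m : ℤ) * (y - x)) + ((m : ℤ) * x) * 1 := by
      rw [hqdef, Matrix.SpecialLinearGroup.coe_mul, coe_Um, hTL, Um_mul_coe]; simp
    have hq10 : (↑q : Matrix (Fin 2) (Fin 2) ℤ) 1 0
        = -((m : ℤ) * x) * (1 + ((m : ℤ) * (y - x)) * ((m : ℤ) * (z + x)))
          + (1 + (m : ℤ) * x) * ((m : ℤ) * (z + x)) := by
      rw [hqdef, Matrix.SpecialLinearGroup.coe_mul, coe_Um, hTL, Um_mul_coe]; simp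
    have hq11 : (↑q : Matrix (Fin 2) (Fin 2) ℤ) 1 1
        = -((m : ℤ) * x) * ((m : ℤ) * (y - x)) + (1 + (m : ℤ) * x) * 1 := by
      rw [hqdef, Matrix.SpecialLinearGroup.coe_mul, coe_Um, hTL, Um_mul_coe]; simp
    have d00 : ((m * 2 : ℕ) : ℤ) ∣ (↑q : Matrix (Fin 2) (Fin 2) ℤ) 0 0
        - (↑h : Matrix (Fin 2) (Fin 2) ℤ) 0 0 := by
      rw [hq00, hx']
      push_cast
      have e : (1 - (m : ℤ) * x) * (1 + ((m : ℤ) * (y - x)) * ((m : ℤ) * (z + x)))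
            + ((m : ℤ) * x) * ((m : ℤ) * (z + x)) - (1 + (m : ℤ) * x)
          = (m : ℤ) * (2 * (-x) + (m : ℤ) * ((y - x) * (z + x) + x * (z + x)
              - (m : ℤ) * (x * (y - x) * (z + x)))) := by ring
      rw [e]
      exact mul_dvd_mul_left (m : ℤ) (dvd_add (Dvd.intro _ rfl) (dvd_mul_of_dvd_left h2m _))
    have d01 : ((m * 2 : ℕ) : ℤ) ∣ (↑q : Matrix (Fin 2) (Fin 2) ℤ) 0 1
        - (↑h : Matrix (Fin 2) (Fin 2) ℤ) 0 1 := by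
      rw [hq01, hy]
      push_cast
      have e : (1 - (m : ℤ) * x) * ((m : ℤ) * (y - x)) + ((m : ℤ) * x) * 1 - (m : ℤ) * y
          = (m : ℤ) * ((m : ℤ) * (-(x * (y - x)))) := by ring
      rw [e]
      exact mul_dvd_mul_left (m : ℤ) (dvd_mul_of_dvd_left h2m _)
    have d10 : ((m * 2 : ℕ) : ℤ) ∣ (↑q : Matrix (Fin 2) (Fin 2) ℤ) 1 0
        - (↑h : Matrix (Fin 2) (Fin 2) ℤ) 1 0 := by
      rw [hq10, hz]
      push_cast
      have e : -((m : ℤ) * x) * (1 + ((m : ℤ) * (y - x)) * ((m : ℤ) * (z + x)))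
            + (1 + (m : ℤ) * x) * ((m : ℤ) * (z + x)) - (m : ℤ) * z
          = (m : ℤ) * ((m : ℤ) * (x * (z + x) - (m : ℤ) * (x * (y - x) * (z + x)))) := by ring
      rw [e]
      exact mul_dvd_mul_left (m : ℤ) (dvd_mul_of_dvd_left h2m _)
    have d11 : ((m * 2 : ℕ) : ℤ) ∣ (↑q : Matrix (Fin 2) (Fin 2) ℤ) 1 1
        - (↑h : Matrix (Fin 2) (Fin 2) ℤ) 1 1 := by
      rw [hq11, hw']
      push_cast
      have e : -((m : ℤ) * x) * ((m : ℤ) * (y - x)) + (1 + (m : ℤ) * x) * 1 - (1 + (m : ℤ) * w)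
          = (m : ℤ) * ((x - w) - (m : ℤ) * (x * (y - x))) := by ring
      rw [e]
      refine mul_dvd_mul_left (m : ℤ) (dvd_sub ?_ (dvd_mul_of_dvd_left h2m _))
      have e2 : x - w = (x + w) - 2 * w := by ring
      rw [e2]
      exact dvd_sub htr2 (Dvd.intro _ rfl)
    intro i j
    fin_cases i <;> fin_cases j
    · exact d00
    · exact d01
    · exact d10
    · exact d11
  · -- Case (ii)
    by_cases h2N₁ : 2 ∣ N₁
    · -- then 2 ∤ N₂ since gcd is odd
      have h2N₂ : ¬ 2 ∣ N₂ := by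
        intro h2
        have hdg : 2 ∣ N₁.gcd N₂ := Nat.dvd_gcd h2N₁ h2
        rw [Nat.odd_iff] at hodd
        omega
      have hkey1 : m.factorization 2 + 1 ≤ (N₁.lcm N₂).factorization 2 :=
        two_pow_succ_dvd hm0.ne' hon hnm
      have hfac : (N₁.lcm N₂).factorization 2 = N₁.factorization 2 := by
        rw [Nat.factorization_lcm hN₁.ne' hN₂.ne']
        rw [Finsupp.sup_apply]
        rw [Nat.factorization_eq_zero_of_not_dvd h2N₂]
        simp
      have hdN₁ : 2 ^ (m.factorization 2 + 1) ∣ N₁ := by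
        refine dvd_trans (pow_dvd_pow 2 ?_) (Nat.ordProj_dvd N₁ 2)
        omega
      refine ⟨Tm ((↑h : Matrix (Fin 2) (Fin 2) ℤ) 0 1),
        Tm_mem_P N₁ N₂ (by simpa using hmod2 0 1), ?_⟩
      apply ModC.inv_mul
      have d00 : ((m * 2 : ℕ) : ℤ) ∣ 1 - (↑h : Matrix (Fin 2) (Fin 2) ℤ) 0 0 := by
        refine dvd_upgrade hm0.ne' hdN₁ ?_ ?_
        · rw [← neg_sub]; exact k00.neg_right
        · rw [← neg_sub]; exact e00.neg_right
      have d10 : ((m * 2 : ℕ) : ℤ) ∣ 0 - (↑h : Matrix (Fin 2) (Fin 2) ℤ) 1 0 := by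
        refine dvd_upgrade hm0.ne' hdN₁ ?_ ?_
        · rw [zero_sub]; exact k10.neg_right
        · rw [zero_sub]; exact e10.neg_right
      have d11 : ((m * 2 : ℕ) : ℤ) ∣ 1 - (↑h : Matrix (Fin 2) (Fin 2) ℤ) 1 1 := by
        refine dvd_upgrade hm0.ne' hdN₁ ?_ ?_
        · rw [← neg_sub]; exact k11.neg_right
        · rw [← neg_sub]; exact e11.neg_right
      intro i j
      fin_cases i <;> fin_cases j
      · simpa [Tm] using d00
      · simp [Tm]
      · simpa [Tm] using d10
      · simpa [Tm] using d11
    · -- 2 ∤ N₁, so 2 ∣ N₂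
      have h2N₂ : 2 ∣ N₂ := by
        by_contra h2
        have hnodd : ¬ 2 ∣ N₁.lcm N₂ := by
          intro h2n
          have hmul : 2 ∣ N₁ * N₂ := h2n.trans (Nat.lcm_dvd_mul N₁ N₂)
          rcases (Nat.Prime.dvd_mul Nat.prime_two).1 hmul with hc | hc
          · exact h2N₁ hc
          · exact h2 hc
        have : ordCompl[2] (N₁.lcm N₂) = N₁.lcm N₂ := by
          rw [Nat.factorization_eq_zero_of_not_dvd hnodd]
          simp
        rw [this] at hon
        exact hnm hon
      have hkey1 : m.factorization 2 + 1 ≤ (N₁.lcm N₂).factorization 2 :=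
        two_pow_succ_dvd hm0.ne' hon hnm
      have hfac : (N₁.lcm N₂).factorization 2 = N₂.factorization 2 := by
        rw [Nat.factorization_lcm hN₁.ne' hN₂.ne']
        rw [Finsupp.sup_apply]
        rw [Nat.factorization_eq_zero_of_not_dvd h2N₁]
        simp
      have hdN₂ : 2 ^ (m.factorization 2 + 1) ∣ N₂ := by
        refine dvd_trans (pow_dvd_pow 2 ?_) (Nat.ordProj_dvd N₂ 2)
        omega
      refine ⟨1, one_mem _, ?_⟩
      rw [inv_one, one_mul]
      intro i j
      exact dvd_upgrade hm0.ne' hdN₂ (hm i j) (hmod2 i j)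

end HodgeAux

namespace HodgeAux

variable (N₁ N₂ : ℕ)

/-- `Γ = P·Γ(m)` relative statement. -/
def DD (m : ℕ) : Prop :=
  ∀ h : SL(2, ℤ), h ∈ GG N₁ N₂ →
    ∃ q ∈ P N₁ N₂, ModC m (↑(q⁻¹ * h) : Matrix (Fin 2) (Fin 2) ℤ) 1

theorem DD_one : DD N₁ N₂ 1 :=
  fun _ _ => ⟨1, one_mem _, fun _ _ => by simp⟩

theorem DD_step {m m' : ℕ}
    (hstep : ∀ h : SL(2, ℤ), h ∈ GG N₁ N₂ →
      ModC m (↑h : Matrix (Fin 2) (Fin 2) ℤ) 1 →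
      ∃ q ∈ P N₁ N₂, ModC m' (↑(q⁻¹ * h) : Matrix (Fin 2) (Fin 2) ℤ) 1)
    (hDD : DD N₁ N₂ m) : DD N₁ N₂ m' := by
  intro h hh
  obtain ⟨q₁, hq₁, hmod₁⟩ := hDD h hh
  have h₁GG : q₁⁻¹ * h ∈ GG N₁ N₂ := mul_mem (inv_mem (P_le N₁ N₂ hq₁)) hh
  obtain ⟨q₂, hq₂, hmod₂⟩ := hstep _ h₁GG hmod₁
  refine ⟨q₁ * q₂, mul_mem hq₁ hq₂, ?_⟩
  have e : (q₁ * q₂)⁻¹ * h = q₂⁻¹ * (q₁⁻¹ * h) := by group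
  rw [e]
  exact hmod₂

theorem step_fresh {m p : ℕ} (hp : p.Prime) (hpm : ¬ p ∣ m)
    {h : SL(2, ℤ)} (hh : h ∈ GG N₁ N₂) (hm : ModC m (↑h : Matrix (Fin 2) (Fin 2) ℤ) 1) :
    ∃ q ∈ P N₁ N₂, ModC (m * p) (↑(q⁻¹ * h) : Matrix (Fin 2) (Fin 2) ℤ) 1 := by
  by_cases hpN₂ : p ∣ N₂
  · exact step_SA hp hpN₂ hpm hh hm
  by_cases hpN₁ : p ∣ N₁
  · exact step_SB hp hpN₁ hpN₂ hpm hh hm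
  · exact step_SC hp hpN₁ hpN₂ hpm hh hm

theorem DD_odd : ∀ m : ℕ, Odd m → DD N₁ N₂ m := by
  intro m
  induction m using Nat.strong_induction_on with
  | _ m ih =>
    intro hmodd
    rcases eq_or_ne m 1 with rfl | hne
    · exact DD_one N₁ N₂
    have hm0 : m ≠ 0 := by rintro rfl; simp [Nat.odd_iff] at hmodd
    have hp := Nat.minFac_prime hne
    have hpdvd : m.minFac ∣ m := m.minFac_dvd
    have hsplit : m / m.minFac * m.minFac = m := Nat.div_mul_cancel hpdvd
    have hlt : m / m.minFac < m :=
      Nat.div_lt_self (Nat.pos_of_ne_zero hm0) hp.one_lt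
    have hoddmul : Odd (m / m.minFac * m.minFac) := by rw [hsplit]; exact hmodd
    have hm'odd : Odd (m / m.minFac) := (Nat.odd_mul.1 hoddmul).1
    have hpodd : Odd m.minFac := (Nat.odd_mul.1 hoddmul).2
    have hDD' := ih _ hlt hm'odd
    rw [← hsplit]
    apply DD_step N₁ N₂ ?_ hDD'
    intro h hh hm
    by_cases hpm' : m.minFac ∣ m / m.minFac
    · exact step_SD hpodd hpm' hh hm
    · exact step_fresh N₁ N₂ hp hpm' hh hm

theorem DD_main (hN₁ : 0 < N₁) (hN₂ : 0 < N₂) (hodd : Odd (N₁.gcd N₂))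
    (M : ℕ) (hM : 0 < M) :
    DD N₁ N₂ (N₁.lcm N₂ * M) := by
  set L := N₁.lcm N₂ * M with hL
  have hL0 : L ≠ 0 := by
    have := Nat.lcm_ne_zero hN₁.ne' hN₂.ne'
    positivity
  have hoc2 : ¬ 2 ∣ ordCompl[2] L := Nat.not_dvd_ordCompl Nat.prime_two hL0
  have hocodd : Odd (ordCompl[2] L) := Nat.odd_iff.2 (by omega)
  have hocpos : 0 < ordCompl[2] L := Nat.ordCompl_pos 2 hL0
  have hocn : ordCompl[2] (N₁.lcm N₂) ∣ ordCompl[2] L :=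
    Nat.ordCompl_dvd_ordCompl_of_dvd (dvd_mul_right _ _) 2
  have claim : ∀ j : ℕ, DD N₁ N₂ (ordCompl[2] L * 2 ^ j) := by
    intro j
    induction j with
    | zero => simpa using DD_odd N₁ N₂ _ hocodd
    | succ j ihj =>
      have heq : ordCompl[2] L * 2 ^ (j + 1) = ordCompl[2] L * 2 ^ j * 2 := by ring
      rw [heq]
      apply DD_step N₁ N₂ ?_ ihj
      intro h hh hm
      rcases Nat.eq_zero_or_pos j with rfl | hj
      · have h2m : ¬ 2 ∣ ordCompl[2] L * 2 ^ 0 := by simpa using hoc2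
        exact step_fresh N₁ N₂ Nat.prime_two h2m hh hm
      · refine step_SE hN₁ hN₂ hodd ?_ ?_ ?_ hh hm
        · positivity
        · exact dvd_mul_of_dvd_right (dvd_pow_self 2 hj.ne') _
        · exact hocn.trans (dvd_mul_right _ _)
  have hfin := claim (L.factorization 2)
  have heq2 : ordCompl[2] L * 2 ^ L.factorization 2 = L := by
    rw [mul_comm]
    exact Nat.ordProj_mul_ordCompl_eq_self L 2
  rwa [heq2] at hfin

/-- Master lemma: every element of `Γ` is a product of an element of `P` and an
element of `Γ(M)`. -/
theorem master (hN₁ : 0 < N₁) (hN₂ : 0 < N₂) (hodd : Odd (N₁.gcd N₂))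
    (M : ℕ) (hM : 0 < M) {h : SL(2, ℤ)} (hh : h ∈ GG N₁ N₂) :
    ∃ q ∈ P N₁ N₂, q⁻¹ * h ∈ Gamma M := by
  obtain ⟨q, hqP, hmod⟩ := DD_main N₁ N₂ hN₁ hN₂ hodd M hM h hh
  exact ⟨q, hqP, mem_Gamma_iff.2 (ModC.of_dvd (dvd_mul_left M _) hmod)⟩

end HodgeAux

open HodgeAux

/-- The Hodge bundle is the unique congruence theta characteristic (group-theoretic form):
if `Γ = Γ₁(N₁) ⊓ Γ(N₂)` with `gcd(N₁,N₂)` odd and `lcm(N₁,N₂) ≥ 5`, then any hyperbolic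
projective lift of `Γ` (a subgroup of `SL(2,ℤ)` not containing `-I`, with the same projective
image as `Γ`, and containing all parabolic elements of `Γ`) that is a congruence subgroup must
equal `Γ` itself. -/
theorem congruence_hyperbolic_projective_lift_eq
    (N₁ N₂ : ℕ) (hN₁ : 0 < N₁) (hN₂ : 0 < N₂)
    (hodd : Odd (Nat.gcd N₁ N₂)) (hlcm : 5 ≤ Nat.lcm N₁ N₂)
    (Γ' : Subgroup SL(2, ℤ))
    (h1 : (-1 : SL(2, ℤ)) ∉ Γ')
    (h2 : pmSet (Γ' : Set SL(2, ℤ)) =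
      pmSet ((Gamma1 N₁ ⊓ Gamma N₂ : Subgroup SL(2, ℤ)) : Set SL(2, ℤ)))
    (h3 : ∀ γ ∈ Gamma1 N₁ ⊓ Gamma N₂, γ ≠ 1 →
      (Matrix.trace ((γ : SL(2, ℤ)) : Matrix (Fin 2) (Fin 2) ℤ) = 2 ∨
       Matrix.trace ((γ : SL(2, ℤ)) : Matrix (Fin 2) (Fin 2) ℤ) = -2) → γ ∈ Γ')
    (h4 : ∃ M : ℕ, 0 < M ∧ Gamma M ≤ Γ') :
    Γ' = Gamma1 N₁ ⊓ Gamma N₂ := by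
  obtain ⟨M, hM0, hMle⟩ := h4
  have keyneg : ∀ B C : SL(2, ℤ), (-B) * C = -(B * C) := by
    intro B C
    apply Subtype.coe_injective
    show ((-B * C : SL(2, ℤ)) : Matrix (Fin 2) (Fin 2) ℤ) = ((-(B * C) : SL(2, ℤ)) : Matrix (Fin 2) (Fin 2) ℤ)
    rw [Matrix.SpecialLinearGroup.coe_mul, Matrix.SpecialLinearGroup.coe_neg,
      Matrix.SpecialLinearGroup.coe_neg, Matrix.SpecialLinearGroup.coe_mul, neg_mul]
  have keyneg2 : ∀ B C : SL(2, ℤ), B * (-C) = -(B * C) := by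
    intro B C
    apply Subtype.coe_injective
    show ((B * -C : SL(2, ℤ)) : Matrix (Fin 2) (Fin 2) ℤ) = ((-(B * C) : SL(2, ℤ)) : Matrix (Fin 2) (Fin 2) ℤ)
    rw [Matrix.SpecialLinearGroup.coe_mul, Matrix.SpecialLinearGroup.coe_neg,
      Matrix.SpecialLinearGroup.coe_neg, Matrix.SpecialLinearGroup.coe_mul, mul_neg]
  -- P ≤ Γ'
  have hPle : P N₁ N₂ ≤ Γ' := by
    rw [P, Subgroup.closure_le]
    rintro g (⟨hg, hg1, hgtr⟩ | ⟨γ, hγ, rfl⟩)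
    · exact h3 g hg hg1 hgtr
    · have hpm : γ ∈ pmSet (Γ' : Set SL(2, ℤ)) := by
        rw [h2]; exact Or.inl hγ
      rcases hpm with hγ' | hγ'
      · exact mul_mem hγ' hγ'
      · have e : (-γ) * (-γ) = γ * γ := by
          rw [keyneg, keyneg2, neg_neg]
        rw [← e]
        exact mul_mem hγ' hγ'
  -- Γ ≤ Γ'
  have hGle : (Gamma1 N₁ ⊓ Gamma N₂ : Subgroup SL(2, ℤ)) ≤ Γ' := by
    intro h hh
    obtain ⟨q, hqP, hmod⟩ := master N₁ N₂ hN₁ hN₂ hodd M hM0 hh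
    have hmem : q⁻¹ * h ∈ Γ' := hMle hmod
    have e : h = q * (q⁻¹ * h) := by group
    rw [e]
    exact mul_mem (hPle hqP) hmem
  refine le_antisymm ?_ hGle
  intro A hA
  have hpm : A ∈ pmSet ((Gamma1 N₁ ⊓ Gamma N₂ : Subgroup SL(2, ℤ)) : Set SL(2, ℤ)) := by
    rw [← h2]; exact Or.inl hA
  rcases hpm with h' | h'
  · exact h'
  · exfalso
    apply h1
    have hmem : -A ∈ Γ' := hGle h'
    have e : (-A) * A⁻¹ = -1 := by
      rw [keyneg, mul_inv_cancel]
    rw [← e]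
    exact mul_mem hmem (inv_mem hA)
end

section
/- For every integer s ≥ 1, the group Γ(2^s) is generated by Γ(2^{s+1}) together with the three matrices α = [[1, 2^s],[0,1]], β = [[1+2^s, −2^s],[2^s, 1−2^s]], and γ = [[1,0],[2^s,1]]; that is, the subgroup of SL(2,ℤ) generated by Γ(2^{s+1}) ∪ {α, β, γ} equals Γ(2^s). -/
open Matrix MatrixGroups CongruenceSubgroup

/-- The shearing matrix `α = [[1, 2^s],[0,1]]` in `SL(2,ℤ)`. -/
def alphaMat (s : ℕ) : SL(2, ℤ) :=
  ⟨!![1, 2 ^ s; 0, 1], by norm_num [Matrix.det_fin_two_of]⟩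

/-- The matrix `β = [[1+2^s, −2^s],[2^s, 1−2^s]]` in `SL(2,ℤ)`. -/
def betaMat (s : ℕ) : SL(2, ℤ) :=
  ⟨!![1 + 2 ^ s, -(2 ^ s); 2 ^ s, 1 - 2 ^ s], by
    simp [Matrix.det_fin_two_of]; ring⟩

/-- The shearing matrix `γ = [[1,0],[2^s,1]]` in `SL(2,ℤ)`. -/
def gammaMat (s : ℕ) : SL(2, ℤ) :=
  ⟨!![1, 0; 2 ^ s, 1], by norm_num [Matrix.det_fin_two_of]⟩

/-- `α^n`. -/
def aPow (s : ℕ) (n : ℤ) : SL(2, ℤ) :=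
  ⟨!![1, n * 2 ^ s; 0, 1], by norm_num [Matrix.det_fin_two_of]⟩

/-- `β^n`. -/
def bPow (s : ℕ) (n : ℤ) : SL(2, ℤ) :=
  ⟨!![1 + n * 2 ^ s, -(n * 2 ^ s); n * 2 ^ s, 1 - n * 2 ^ s], by
    simp [Matrix.det_fin_two_of]; ring⟩

/-- `γ^n`. -/
def cPow (s : ℕ) (n : ℤ) : SL(2, ℤ) :=
  ⟨!![1, 0; n * 2 ^ s, 1], by norm_num [Matrix.det_fin_two_of]⟩

lemma aPow_mul (s : ℕ) (m n : ℤ) : aPow s m * aPow s n = aPow s (m + n) := by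
  apply Subtype.ext
  rw [Matrix.SpecialLinearGroup.coe_mul]
  ext i j
  fin_cases i <;> fin_cases j <;> simp [aPow, Matrix.mul_fin_two] <;> ring

lemma bPow_mul (s : ℕ) (m n : ℤ) : bPow s m * bPow s n = bPow s (m + n) := by
  apply Subtype.ext
  rw [Matrix.SpecialLinearGroup.coe_mul]
  ext i j
  fin_cases i <;> fin_cases j <;> simp [bPow, Matrix.mul_fin_two] <;> ring

lemma cPow_mul (s : ℕ) (m n : ℤ) : cPow s m * cPow s n = cPow s (m + n) := by
  apply Subtype.ext
  rw [Matrix.SpecialLinearGroup.coe_mul]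
  ext i j
  fin_cases i <;> fin_cases j <;> simp [cPow, Matrix.mul_fin_two] <;> ring

lemma aPow_zero (s : ℕ) : aPow s 0 = 1 := by
  apply Subtype.ext
  ext i j
  fin_cases i <;> fin_cases j <;> simp [aPow]

lemma bPow_zero (s : ℕ) : bPow s 0 = 1 := by
  apply Subtype.ext
  ext i j
  fin_cases i <;> fin_cases j <;> simp [bPow]

lemma cPow_zero (s : ℕ) : cPow s 0 = 1 := by
  apply Subtype.ext
  ext i j
  fin_cases i <;> fin_cases j <;> simp [cPow]

lemma aPow_one (s : ℕ) : aPow s 1 = alphaMat s := by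
  apply Subtype.ext
  ext i j
  fin_cases i <;> fin_cases j <;> simp [aPow, alphaMat]

lemma bPow_one (s : ℕ) : bPow s 1 = betaMat s := by
  apply Subtype.ext
  ext i j
  fin_cases i <;> fin_cases j <;> simp [bPow, betaMat]

lemma cPow_one (s : ℕ) : cPow s 1 = gammaMat s := by
  apply Subtype.ext
  ext i j
  fin_cases i <;> fin_cases j <;> simp [cPow, gammaMat]

lemma aPow_inv (s : ℕ) (n : ℤ) : (aPow s n)⁻¹ = aPow s (-n) :=
  inv_eq_of_mul_eq_one_right (by rw [aPow_mul, add_neg_cancel, aPow_zero])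

lemma bPow_inv (s : ℕ) (n : ℤ) : (bPow s n)⁻¹ = bPow s (-n) :=
  inv_eq_of_mul_eq_one_right (by rw [bPow_mul, add_neg_cancel, bPow_zero])

lemma cPow_inv (s : ℕ) (n : ℤ) : (cPow s n)⁻¹ = cPow s (-n) :=
  inv_eq_of_mul_eq_one_right (by rw [cPow_mul, add_neg_cancel, cPow_zero])

section mem

variable {K : Subgroup SL(2, ℤ)} {s : ℕ}

lemma pow_mem_of_one_mem (f : ℤ → SL(2, ℤ)) (hmul : ∀ m n, f m * f n = f (m + n))
    (hzero : f 0 = 1) (h1 : f 1 ∈ K) : ∀ n : ℤ, f n ∈ K := by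
  have hneg : f (-1) ∈ K := by
    have h : f (-1) = (f 1)⁻¹ :=
      eq_inv_of_mul_eq_one_left (by rw [hmul, neg_add_cancel, hzero])
    rw [h]; exact inv_mem h1
  intro n
  induction n using Int.induction_on with
  | zero => rw [hzero]; exact one_mem K
  | succ k ih => rw [← hmul _ 1]; exact mul_mem ih h1
  | pred k ih => rw [show (-(k:ℤ) - 1) = -k + -1 by ring, ← hmul]; exact mul_mem ih hneg

lemma aPow_mem (h : alphaMat s ∈ K) (n : ℤ) : aPow s n ∈ K :=
  pow_mem_of_one_mem (aPow s) (aPow_mul s) (aPow_zero s) (by rwa [aPow_one]) n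

lemma bPow_mem (h : betaMat s ∈ K) (n : ℤ) : bPow s n ∈ K :=
  pow_mem_of_one_mem (bPow s) (bPow_mul s) (bPow_zero s) (by rwa [bPow_one]) n

lemma cPow_mem (h : gammaMat s ∈ K) (n : ℤ) : cPow s n ∈ K :=
  pow_mem_of_one_mem (cPow s) (cPow_mul s) (cPow_zero s) (by rwa [cPow_one]) n

end mem

lemma zmod_eq_one_iff (n : ℕ) (a : ℤ) : ((a : ZMod n) = 1) ↔ (n : ℤ) ∣ a - 1 := by
  have h1 : (1 : ZMod n) = ((1 : ℤ) : ZMod n) := by norm_cast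
  rw [h1, ZMod.intCast_eq_intCast_iff, Int.modEq_iff_dvd, dvd_sub_comm]

lemma zmod_eq_zero_iff (n : ℕ) (a : ℤ) : ((a : ZMod n) = 0) ↔ (n : ℤ) ∣ a :=
  ZMod.intCast_zmod_eq_zero_iff_dvd a n

set_option maxHeartbeats 1600000 in
/-- For `s ≥ 1`, the group `Γ(2^s)` is generated by `Γ(2^{s+1})` together with the three
matrices `α = [[1,2^s],[0,1]]`, `β = [[1+2^s,−2^s],[2^s,1−2^s]]` and `γ = [[1,0],[2^s,1]]`. -/
theorem Gamma_two_pow_generators (s : ℕ) (hs : 1 ≤ s) :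
    Subgroup.closure ((Gamma (2 ^ (s + 1)) : Set SL(2, ℤ)) ∪
        {alphaMat s, betaMat s, gammaMat s}) = Gamma (2 ^ s) := by
  obtain ⟨t, rfl⟩ : ∃ t, s = t + 1 := ⟨s - 1, by omega⟩
  have hdvd : (((2:ℕ) ^ (t + 1) : ℕ) : ℤ) ∣ (((2:ℕ) ^ (t + 1 + 1) : ℕ) : ℤ) := by
    push_cast
    exact pow_dvd_pow 2 (by omega)
  apply le_antisymm
  · rw [Subgroup.closure_le]
    rintro A (hA | hA)
    · -- Gamma (2^(s+1)) ≤ Gamma (2^s)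
      rw [SetLike.mem_coe, Gamma_mem] at hA ⊢
      obtain ⟨h1, h2, h3, h4⟩ := hA
      rw [zmod_eq_one_iff] at h1 h4
      rw [zmod_eq_zero_iff] at h2 h3
      refine ⟨?_, ?_, ?_, ?_⟩
      · rw [zmod_eq_one_iff]; exact dvd_trans hdvd h1
      · rw [zmod_eq_zero_iff]; exact dvd_trans hdvd h2
      · rw [zmod_eq_zero_iff]; exact dvd_trans hdvd h3
      · rw [zmod_eq_one_iff]; exact dvd_trans hdvd h4
    · -- the three generators lie in Γ(2^(t+1))
      simp only [Set.mem_insert_iff, Set.mem_singleton_iff] at hA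
      have hp : (((2:ℕ) ^ (t + 1) : ℕ) : ℤ) ∣ ((2:ℤ) ^ (t + 1)) := by push_cast; rfl
      rcases hA with rfl | rfl | rfl <;>
        · rw [SetLike.mem_coe, Gamma_mem]
          refine ⟨?_, ?_, ?_, ?_⟩ <;>
            simp only [alphaMat, betaMat, gammaMat, SpecialLinearGroup.coe_mk,
              Matrix.cons_val', Matrix.cons_val_zero, Matrix.cons_val_one, Matrix.head_cons,
              Matrix.empty_val', Matrix.cons_val_fin_one, Matrix.head_fin_const,
              Matrix.of_apply] <;>
            first
              | (rw [zmod_eq_one_iff]; push_cast;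
                  first | (refine ⟨0, ?_⟩; ring1) | (refine ⟨1, ?_⟩; ring1) | (refine ⟨-1, ?_⟩; ring1))
              | (rw [zmod_eq_zero_iff]; push_cast;
                  first | (refine ⟨0, ?_⟩; ring1) | (refine ⟨1, ?_⟩; ring1) | (refine ⟨-1, ?_⟩; ring1))
  · -- Γ(2^(t+1)) ≤ closure
    intro A hA
    set S : Set SL(2, ℤ) := (Gamma (2 ^ (t + 1 + 1)) : Set SL(2, ℤ)) ∪
        {alphaMat (t + 1), betaMat (t + 1), gammaMat (t + 1)} with hS
    have hα : alphaMat (t + 1) ∈ Subgroup.closure S :=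
      Subgroup.subset_closure (Or.inr (by simp))
    have hβ : betaMat (t + 1) ∈ Subgroup.closure S :=
      Subgroup.subset_closure (Or.inr (by simp))
    have hγ : gammaMat (t + 1) ∈ Subgroup.closure S :=
      Subgroup.subset_closure (Or.inr (by simp))
    rw [Gamma_mem] at hA
    obtain ⟨h1, h2, h3, h4⟩ := hA
    rw [zmod_eq_one_iff] at h1 h4
    rw [zmod_eq_zero_iff] at h2 h3
    push_cast at h1 h2 h3 h4
    obtain ⟨a1, ha⟩ := h1
    obtain ⟨b1, hb⟩ := h2
    obtain ⟨c1, hc⟩ := h3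
    obtain ⟨d1, hd⟩ := h4
    have ha' : (A : Matrix (Fin 2) (Fin 2) ℤ) 0 0 = 1 + 2 ^ (t + 1) * a1 := by
      linear_combination ha
    have hb' : (A : Matrix (Fin 2) (Fin 2) ℤ) 0 1 = 2 ^ (t + 1) * b1 := by
      linear_combination hb
    have hc' : (A : Matrix (Fin 2) (Fin 2) ℤ) 1 0 = 2 ^ (t + 1) * c1 := by
      linear_combination hc
    have hd' : (A : Matrix (Fin 2) (Fin 2) ℤ) 1 1 = 1 + 2 ^ (t + 1) * d1 := by
      linear_combination hd
    have hdet : (A : Matrix (Fin 2) (Fin 2) ℤ) 0 0 * (A : Matrix (Fin 2) (Fin 2) ℤ) 1 1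
        - (A : Matrix (Fin 2) (Fin 2) ℤ) 0 1 * (A : Matrix (Fin 2) (Fin 2) ℤ) 1 0 = 1 := by
      have h := A.property
      rwa [Matrix.det_fin_two] at h
    rw [ha', hb', hc', hd'] at hdet
    have hdet2 : 2 ^ (t + 1) * (a1 + d1) + 2 ^ (t + 1) * 2 ^ (t + 1) * (a1 * d1 - b1 * c1)
        = (0 : ℤ) := by linear_combination hdet
    have hAm : (A : Matrix (Fin 2) (Fin 2) ℤ) =
        !![1 + 2 ^ (t + 1) * a1, 2 ^ (t + 1) * b1; 2 ^ (t + 1) * c1, 1 + 2 ^ (t + 1) * d1] := by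
      ext i j
      fin_cases i <;> fin_cases j <;> simp [ha', hb', hc', hd']
    set g : SL(2, ℤ) := bPow (t + 1) a1 * aPow (t + 1) (b1 - a1) * cPow (t + 1) (c1 - a1)
      with hgdef
    have hg : g ∈ Subgroup.closure S :=
      mul_mem (mul_mem (bPow_mem hβ _) (aPow_mem hα _)) (cPow_mem hγ _)
    have hginv : g⁻¹ = cPow (t + 1) (a1 - c1) * (aPow (t + 1) (a1 - b1) * bPow (t + 1) (-a1)) := by
      refine inv_eq_of_mul_eq_one_right ?_
      rw [hgdef, mul_assoc, mul_assoc, ← mul_assoc (cPow (t + 1) (c1 - a1)), cPow_mul,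
        show c1 - a1 + (a1 - c1) = 0 by ring, cPow_zero, one_mul,
        ← mul_assoc (aPow (t + 1) (b1 - a1)), aPow_mul,
        show b1 - a1 + (a1 - b1) = 0 by ring, aPow_zero, one_mul, bPow_mul,
        show a1 + -a1 = 0 by ring, bPow_zero]
    have hQ : ((g⁻¹ : SL(2, ℤ)) : Matrix (Fin 2) (Fin 2) ℤ) =
        !![1 - a1*2^(t+1) + a1*b1*(2^(t+1))^2 - a1^2*(2^(t+1))^2,
           -(b1*2^(t+1)) + 2*a1*2^(t+1) - a1*b1*(2^(t+1))^2 + a1^2*(2^(t+1))^2;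
           -(c1*2^(t+1)) + a1*c1*(2^(t+1))^2 - a1*b1*c1*(2^(t+1))^3 - a1^2*(2^(t+1))^2 + a1^2*c1*(2^(t+1))^3 + a1^2*b1*(2^(t+1))^3 - a1^3*(2^(t+1))^3,
           1 + b1*c1*(2^(t+1))^2 + a1*2^(t+1) - 2*a1*c1*(2^(t+1))^2 - a1*b1*(2^(t+1))^2 + a1*b1*c1*(2^(t+1))^3 + 2*a1^2*(2^(t+1))^2 - a1^2*c1*(2^(t+1))^3 - a1^2*b1*(2^(t+1))^3 + a1^3*(2^(t+1))^3] := by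
      rw [hginv]
      rw [Matrix.SpecialLinearGroup.coe_mul, Matrix.SpecialLinearGroup.coe_mul]
      ext i j
      fin_cases i <;> fin_cases j <;>
        simp [aPow, bPow, cPow, SpecialLinearGroup.coe_mul, Matrix.mul_fin_two] <;> ring
    have hRm : ((A * g⁻¹ : SL(2, ℤ)) : Matrix (Fin 2) (Fin 2) ℤ) =
        !![1 - b1*c1*(2^(t+1))^2 + a1*b1*(2^(t+1))^2 + a1*b1*c1*(2^(t+1))^3 - a1*b1^2*c1*(2^(t+1))^4 - 2*a1^2*(2^(t+1))^2 + a1^2*b1*c1*(2^(t+1))^4 + a1^2*b1^2*(2^(t+1))^4 - a1^3*(2^(t+1))^3 - a1^3*b1*(2^(t+1))^4,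
           b1^2*c1*(2^(t+1))^3 + 2*a1*2^(t+1) - a1*b1*(2^(t+1))^2 - 2*a1*b1*c1*(2^(t+1))^3 - a1*b1^2*(2^(t+1))^3 + a1*b1^2*c1*(2^(t+1))^4 + 3*a1^2*(2^(t+1))^2 + a1^2*b1*(2^(t+1))^3 - a1^2*b1*c1*(2^(t+1))^4 - a1^2*b1^2*(2^(t+1))^4 + a1^3*(2^(t+1))^3 + a1^3*b1*(2^(t+1))^4;
           -(c1*d1*(2^(t+1))^2) + a1*c1*d1*(2^(t+1))^3 - a1*b1*c1*d1*(2^(t+1))^4 - a1^2*(2^(t+1))^2 - a1^2*d1*(2^(t+1))^3 + a1^2*c1*d1*(2^(t+1))^4 + a1^2*b1*(2^(t+1))^3 + a1^2*b1*d1*(2^(t+1))^4 - a1^3*(2^(t+1))^3 - a1^3*d1*(2^(t+1))^4,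
           1 + d1*2^(t+1) + b1*c1*d1*(2^(t+1))^3 + a1*2^(t+1) + a1*d1*(2^(t+1))^2 - 2*a1*c1*d1*(2^(t+1))^3 - a1*b1*(2^(t+1))^2 - a1*b1*d1*(2^(t+1))^3 + a1*b1*c1*d1*(2^(t+1))^4 + 2*a1^2*(2^(t+1))^2 + 2*a1^2*d1*(2^(t+1))^3 - a1^2*c1*d1*(2^(t+1))^4 - a1^2*b1*(2^(t+1))^3 - a1^2*b1*d1*(2^(t+1))^4 + a1^3*(2^(t+1))^3 + a1^3*d1*(2^(t+1))^4] := by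
      have hco : ((A * g⁻¹ : SL(2, ℤ)) : Matrix (Fin 2) (Fin 2) ℤ) =
          (A : Matrix (Fin 2) (Fin 2) ℤ) * ((g⁻¹ : SL(2, ℤ)) : Matrix (Fin 2) (Fin 2) ℤ) :=
        Matrix.SpecialLinearGroup.coe_mul _ _
      rw [hco, hAm, hQ]
      ext i j
      fin_cases i <;> fin_cases j <;> simp [Matrix.mul_fin_two] <;> ring
    have hmem : A * g⁻¹ ∈ Gamma (2 ^ (t + 1 + 1)) := by
      rw [Gamma_mem, hRm]
      refine ⟨?_, ?_, ?_, ?_⟩ <;>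
        simp only [Matrix.cons_val', Matrix.cons_val_zero, Matrix.cons_val_one, Matrix.head_cons,
          Matrix.empty_val', Matrix.cons_val_fin_one, Matrix.head_fin_const, Matrix.of_apply]
      · rw [zmod_eq_one_iff]; push_cast
        exact ⟨-b1*c1*2^t + a1*b1*2^t + 2*a1*b1*c1*(2^t)^2 - 4*a1*b1^2*c1*(2^t)^3 - 2*a1^2*2^t + 4*a1^2*b1*c1*(2^t)^3 + 4*a1^2*b1^2*(2^t)^3 - 2*a1^3*(2^t)^2 - 4*a1^3*b1*(2^t)^3, by ring⟩
      · rw [zmod_eq_zero_iff]; push_cast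
        exact ⟨2*b1^2*c1*(2^t)^2 + a1 - a1*b1*2^t - 4*a1*b1*c1*(2^t)^2 - 2*a1*b1^2*(2^t)^2 + 4*a1*b1^2*c1*(2^t)^3 + 3*a1^2*2^t + 2*a1^2*b1*(2^t)^2 - 4*a1^2*b1*c1*(2^t)^3 - 4*a1^2*b1^2*(2^t)^3 + 2*a1^3*(2^t)^2 + 4*a1^3*b1*(2^t)^3, by ring⟩
      · rw [zmod_eq_zero_iff]; push_cast
        exact ⟨-c1*d1*2^t + 2*a1*c1*d1*(2^t)^2 - 4*a1*b1*c1*d1*(2^t)^3 - a1^2*2^t - 2*a1^2*d1*(2^t)^2 + 4*a1^2*c1*d1*(2^t)^3 + 2*a1^2*b1*(2^t)^2 + 4*a1^2*b1*d1*(2^t)^3 - 2*a1^3*(2^t)^2 - 4*a1^3*d1*(2^t)^3, by ring⟩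
      · rw [zmod_eq_one_iff]; push_cast
        exact ⟨b1*c1*2^t + 2*b1*c1*d1*(2^t)^2 - 4*a1*c1*d1*(2^t)^2 - a1*b1*2^t - 2*a1*b1*d1*(2^t)^2 + 4*a1*b1*c1*d1*(2^t)^3 + 2*a1^2*2^t + 4*a1^2*d1*(2^t)^2 - 4*a1^2*c1*d1*(2^t)^3 - 2*a1^2*b1*(2^t)^2 - 4*a1^2*b1*d1*(2^t)^3 + 2*a1^3*(2^t)^2 + 4*a1^3*d1*(2^t)^3, by linear_combination hdet2⟩
    have hfin : A = (A * g⁻¹) * g := by rw [inv_mul_cancel_right]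
    rw [hfin]
    exact mul_mem (Subgroup.subset_closure (Or.inl hmem)) hg
end

section
/- For every integer s ≥ 1, let H be the subgroup of Γ₁(2^s) generated by Γ(2^{s+1}) together with all squares A² (A ∈ Γ₁(2^s)) and all commutators ⁅A,B⁆ (A, B ∈ Γ₁(2^s)). Then H has index 4 in Γ₁(2^s), and Γ₁(2^s) is generated by H together with the two matrices τ = [[1,1],[0,1]] and γ = [[1,0],[2^s,1]]; in other words, V₂(Γ₁(2^s)/Γ(2^{s+1})) ≅ (ℤ/2ℤ)² with basis the images of τ and γ. -/
open Matrix MatrixGroups CongruenceSubgroup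

/-- The shearing matrix `τ = [[1,1],[0,1]]` in `SL(2,ℤ)`. -/
def tauMat : SL(2, ℤ) := ⟨!![1, 1; 0, 1], by norm_num [Matrix.det_fin_two_of]⟩

def Tk (k : ℤ) : SL(2,ℤ) := ⟨!![1, k; 0, 1], by norm_num [Matrix.det_fin_two_of]⟩
def Emat (s : ℕ) : SL(2,ℤ) :=
  ⟨!![1 + 2^s, 1; 2^s, 1], by rw [Matrix.det_fin_two_of]; ring⟩
def Dinv (s : ℕ) : SL(2,ℤ) :=
  ⟨!![1 + 2^s, -(2 + 2^s); -(2*2^s + 2^s*2^s), 1 + 3*2^s + 2^s*2^s],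
    by rw [Matrix.det_fin_two_of]; ring⟩

lemma Tk_mul (a b : ℤ) : Tk a * Tk b = Tk (a + b) := by
  apply Subtype.ext
  ext i j
  rw [Matrix.SpecialLinearGroup.coe_mul]
  fin_cases i <;> fin_cases j <;>
    (simp [Tk, Matrix.mul_apply, Fin.sum_univ_two]; try ring)

lemma Tk_zero : Tk 0 = 1 := by
  apply Subtype.ext
  ext i j
  fin_cases i <;> fin_cases j <;> simp [Tk]

lemma Emat_sq_Dinv (s : ℕ) : Emat s * Emat s * Dinv s = 1 := by
  apply Subtype.ext
  ext i j
  rw [Matrix.SpecialLinearGroup.coe_mul, Matrix.SpecialLinearGroup.coe_mul]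
  fin_cases i <;> fin_cases j <;>
    (simp [Emat, Dinv, Matrix.mul_apply, Fin.sum_univ_two]; try ring)

lemma dvd_iff_cast {N : ℕ} {x : ℤ} : ((x : ZMod N) = 1 ↔ (N : ℤ) ∣ x - 1) := by
  rw [← sub_eq_zero, show ((x : ZMod N) - 1) = ((x - 1 : ℤ) : ZMod N) by push_cast; ring,
    ZMod.intCast_zmod_eq_zero_iff_dvd]

lemma memG1_iff {s : ℕ} {A : SL(2,ℤ)} : A ∈ Gamma1 (2^s) ↔
    ((2^s : ℤ) ∣ A 0 0 - 1 ∧ (2^s : ℤ) ∣ A 1 1 - 1 ∧ (2^s : ℤ) ∣ A 1 0) := by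
  rw [Gamma1_mem, dvd_iff_cast, dvd_iff_cast, ZMod.intCast_zmod_eq_zero_iff_dvd]
  push_cast; rfl

lemma memG_iff {s : ℕ} {A : SL(2,ℤ)} : A ∈ Gamma (2^s) ↔
    ((2^s : ℤ) ∣ A 0 0 - 1 ∧ (2^s : ℤ) ∣ A 0 1 ∧ (2^s : ℤ) ∣ A 1 0 ∧ (2^s : ℤ) ∣ A 1 1 - 1) := by
  rw [Gamma_mem, dvd_iff_cast, dvd_iff_cast, ZMod.intCast_zmod_eq_zero_iff_dvd,
    ZMod.intCast_zmod_eq_zero_iff_dvd]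
  push_cast; tauto

lemma mul_Tk00 (A : SL(2,ℤ)) (k : ℤ) : (A * Tk k) 0 0 = A 0 0 := by
  rw [Matrix.SpecialLinearGroup.coe_mul]
  simp [Tk, Matrix.mul_apply, Fin.sum_univ_two]
lemma mul_Tk01 (A : SL(2,ℤ)) (k : ℤ) : (A * Tk k) 0 1 = A 0 0 * k + A 0 1 := by
  rw [Matrix.SpecialLinearGroup.coe_mul]
  simp [Tk, Matrix.mul_apply, Fin.sum_univ_two]
lemma mul_Tk10 (A : SL(2,ℤ)) (k : ℤ) : (A * Tk k) 1 0 = A 1 0 := by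
  rw [Matrix.SpecialLinearGroup.coe_mul]
  simp [Tk, Matrix.mul_apply, Fin.sum_univ_two]
lemma mul_Tk11 (A : SL(2,ℤ)) (k : ℤ) : (A * Tk k) 1 1 = A 1 0 * k + A 1 1 := by
  rw [Matrix.SpecialLinearGroup.coe_mul]
  simp [Tk, Matrix.mul_apply, Fin.sum_univ_two]

lemma det_sl (A : SL(2,ℤ)) : A 0 0 * A 1 1 - A 0 1 * A 1 0 = 1 := by
  have := A.property
  rwa [Matrix.det_fin_two] at this

lemma Tk_memG1 (s : ℕ) (k : ℤ) : Tk k ∈ Gamma1 (2^s) := by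
  rw [memG1_iff]; simp [Tk]

lemma case1 {s : ℕ} (hs : 1 ≤ s) (H : Subgroup SL(2,ℤ))
    (hsq : ∀ X : SL(2,ℤ), X ∈ Gamma1 (2^s) → X^2 ∈ H)
    (hGa : ∀ X : SL(2,ℤ), X ∈ Gamma (2^(s+1)) → X ∈ H)
    {A : SL(2,ℤ)} (h1 : A ∈ Gamma1 (2^s))
    (hb : (2:ℤ) ∣ A 0 1) (hc : (2:ℤ)^(s+1) ∣ A 1 0) (ha : (2:ℤ)^(s+1) ∣ A 0 0 - 1) :
    A ∈ H := by
  obtain ⟨m, hm⟩ := hb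
  obtain ⟨n, hn⟩ := ha
  obtain ⟨w, hw⟩ := hc
  rw [pow_succ] at hn
  have hdet := det_sl A
  have hA : A = (A * Tk (-(A 0 1))) * (Tk m)^2 := by
    rw [sq, Tk_mul, mul_assoc, Tk_mul, show -(A 0 1) + (m + m) = 0 by omega, Tk_zero, mul_one]
  rw [hA]
  refine mul_mem (hGa _ ?_) (hsq _ (Tk_memG1 s m))
  rw [memG_iff]
  refine ⟨?_, ?_, ?_, ?_⟩
  · rw [mul_Tk00, pow_succ]; exact ⟨n, hn⟩
  · rw [mul_Tk01, pow_succ]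
    refine ⟨-(2*m*n), ?_⟩
    linear_combination (-(A 0 1)) * hn + (-(2 * 2^s * n)) * hm
  · rw [mul_Tk10]; exact ⟨w, hw⟩
  · rw [mul_Tk11, pow_succ]
    refine ⟨-(A 1 1 * n), ?_⟩
    linear_combination hdet - A 1 1 * hn

lemma Dinv_mul00 (s : ℕ) (A : SL(2,ℤ)) :
    (Dinv s * A) 0 0 = (1+2^s) * A 0 0 + (-(2+2^s)) * A 1 0 := by
  rw [Matrix.SpecialLinearGroup.coe_mul]
  simp [Dinv, Matrix.mul_apply, Fin.sum_univ_two]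
lemma Dinv_mul01 (s : ℕ) (A : SL(2,ℤ)) :
    (Dinv s * A) 0 1 = (1+2^s) * A 0 1 + (-(2+2^s)) * A 1 1 := by
  rw [Matrix.SpecialLinearGroup.coe_mul]
  simp [Dinv, Matrix.mul_apply, Fin.sum_univ_two]
lemma Dinv_mul10 (s : ℕ) (A : SL(2,ℤ)) :
    (Dinv s * A) 1 0 = (-(2*2^s+2^s*2^s)) * A 0 0 + (1+3*2^s+2^s*2^s) * A 1 0 := by
  rw [Matrix.SpecialLinearGroup.coe_mul]
  simp [Dinv, Matrix.mul_apply, Fin.sum_univ_two]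

lemma Dinv_memG1 (s : ℕ) : Dinv s ∈ Gamma1 (2^s) := by
  rw [memG1_iff]
  refine ⟨⟨1, by simp [Dinv]⟩, ⟨3 + 2^s, by simp [Dinv]; ring⟩, ⟨-(2+2^s), by simp [Dinv]; ring⟩⟩

lemma Emat_memG1 (s : ℕ) : Emat s ∈ Gamma1 (2^s) := by
  rw [memG1_iff]
  refine ⟨⟨1, by simp [Emat]⟩, ⟨0, by simp [Emat]⟩, ⟨1, by simp [Emat]⟩⟩

lemma ker_sub_H {s : ℕ} (hs : 1 ≤ s) (H : Subgroup SL(2,ℤ))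
    (hsq : ∀ X : SL(2,ℤ), X ∈ Gamma1 (2^s) → X^2 ∈ H)
    (hGa : ∀ X : SL(2,ℤ), X ∈ Gamma (2^(s+1)) → X ∈ H)
    {A : SL(2,ℤ)} (h1 : A ∈ Gamma1 (2^s))
    (hb : (2:ℤ) ∣ A 0 1) (hc : (2:ℤ)^(s+1) ∣ A 1 0) : A ∈ H := by
  obtain ⟨⟨p, hp⟩, -, -⟩ := memG1_iff.mp h1
  obtain ⟨v, hv⟩ : (2:ℤ) ∣ 2^s := dvd_pow_self 2 (by omega)
  obtain ⟨m, hm⟩ := hb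
  obtain ⟨w, hw⟩ := hc
  rw [pow_succ] at hw
  rcases Int.even_or_odd p with ⟨t, ht⟩ | ⟨t, ht⟩
  · refine case1 hs H hsq hGa h1 ⟨m, hm⟩ ⟨w, by rw [pow_succ]; exact hw⟩
      ⟨t, by rw [pow_succ, hp, ht]; ring⟩
  · rw [ht] at hp
    have hA : A = (Emat s * Emat s) * (Dinv s * A) := by
      rw [← mul_assoc, Emat_sq_Dinv, one_mul]
    have h1' : Dinv s * A ∈ Gamma1 (2^s) := mul_mem (Dinv_memG1 s) h1
    have hb' : (2:ℤ) ∣ (Dinv s * A) 0 1 := by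
      refine ⟨(1+2^s)*m - (1+v)*A 1 1, ?_⟩
      rw [Dinv_mul01]
      linear_combination (1+(2:ℤ)^s) * hm + (-(A 1 1)) * hv
    have hc' : (2:ℤ)^(s+1) ∣ (Dinv s * A) 1 0 := by
      refine ⟨-(1+v)*A 0 0 + (1+3*2^s+2^s*2^s)*w, ?_⟩
      rw [Dinv_mul10, pow_succ]
      linear_combination (1+3*(2:ℤ)^s+2^s*2^s) * hw + (-(A 0 0)*2^s) * hv
    have ha' : (2:ℤ)^(s+1) ∣ (Dinv s * A) 0 0 - 1 := by
      refine ⟨t + 1 + 2^s*t + v - (2+2^s)*w, ?_⟩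
      rw [Dinv_mul00, pow_succ]
      linear_combination (1+(2:ℤ)^s) * hp + (2:ℤ)^s * hv + (-(2+(2:ℤ)^s)) * hw
    rw [hA]
    exact mul_mem (by rw [← sq]; exact hsq _ (Emat_memG1 s))
      (case1 hs H hsq hGa h1' hb' hc' ha')

lemma cast_one_of_dvd {x : ℤ} (h : (2:ℤ) ∣ x - 1) : (x : ZMod 2) = 1 := by
  rw [dvd_iff_cast]; exact_mod_cast h

def phi (s : ℕ) (hs : 1 ≤ s) : ↥(Gamma1 (2^s)) →* Multiplicative (ZMod 2 × ZMod 2) where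
  toFun A := Multiplicative.ofAdd
    (((A : SL(2,ℤ)) 0 1 : ZMod 2), (((A : SL(2,ℤ)) 1 0 / 2^s : ℤ) : ZMod 2))
  map_one' := by simp
  map_mul' := by
    rintro ⟨A, hA⟩ ⟨B, hB⟩
    rw [memG1_iff] at hA hB
    obtain ⟨hA1, hA2, x, hx⟩ := hA
    obtain ⟨hB1, hB2, y, hy⟩ := hB
    have h2 : (2:ℤ) ∣ 2^s := dvd_pow_self 2 (by omega)
    have ps : (2:ℤ)^s ≠ 0 := by positivity
    have ea : ((A 0 0 : ℤ) : ZMod 2) = 1 := cast_one_of_dvd (dvd_trans h2 hA1)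
    have ed : ((A 1 1 : ℤ) : ZMod 2) = 1 := cast_one_of_dvd (dvd_trans h2 hA2)
    have eb : ((B 0 0 : ℤ) : ZMod 2) = 1 := cast_one_of_dvd (dvd_trans h2 hB1)
    have ee : ((B 1 1 : ℤ) : ZMod 2) = 1 := cast_one_of_dvd (dvd_trans h2 hB2)
    have m1 : (A * B) 0 1 = A 0 0 * B 0 1 + A 0 1 * B 1 1 := by
      simp [Matrix.mul_apply, Fin.sum_univ_two]
    have m2 : (A * B) 1 0 = A 1 0 * B 0 0 + A 1 1 * B 1 0 := by
      simp [Matrix.mul_apply, Fin.sum_univ_two]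
    have d1 : (A * B) 1 0 / 2^s = x * B 0 0 + A 1 1 * y := by
      rw [m2, hx, hy,
        show (2:ℤ)^s * x * B 0 0 + A 1 1 * (2^s * y) = 2^s * (x * B 0 0 + A 1 1 * y) by ring,
        Int.mul_ediv_cancel_left _ ps]
    have d2 : A 1 0 / 2^s = x := by rw [hx, Int.mul_ediv_cancel_left _ ps]
    have d3 : B 1 0 / 2^s = y := by rw [hy, Int.mul_ediv_cancel_left _ ps]
    simp only [MulMemClass.mk_mul_mk]
    rw [← ofAdd_add, Prod.mk_add_mk]
    refine congrArg _ (Prod.ext ?_ ?_)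
    · rw [m1]; push_cast [ea, ee]; ring
    · rw [d1, d2, d3]; push_cast [eb, ed]; ring

lemma tau_memG1 (s : ℕ) : tauMat ∈ Gamma1 (2^s) := by
  rw [memG1_iff]; simp [tauMat]

lemma gamma_memG1 (s : ℕ) : gammaMat s ∈ Gamma1 (2^s) := by
  rw [memG1_iff]; simp [gammaMat]

lemma phi_tau (s : ℕ) (hs : 1 ≤ s) :
    phi s hs ⟨tauMat, tau_memG1 s⟩ = Multiplicative.ofAdd ((1 : ZMod 2), (0 : ZMod 2)) := by
  simp [phi, tauMat]

lemma phi_gamma (s : ℕ) (hs : 1 ≤ s) :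
    phi s hs ⟨gammaMat s, gamma_memG1 s⟩ = Multiplicative.ofAdd ((0 : ZMod 2), (1 : ZMod 2)) := by
  have ps : (2:ℤ)^s ≠ 0 := by positivity
  simp [phi, gammaMat, Int.ediv_self ps]

lemma phi_eq_one_iff {s : ℕ} (hs : 1 ≤ s) {A : SL(2,ℤ)} (hA : A ∈ Gamma1 (2^s)) :
    phi s hs ⟨A, hA⟩ = 1 ↔ ((2:ℤ) ∣ A 0 1 ∧ (2:ℤ)^(s+1) ∣ A 1 0) := by
  obtain ⟨-, -, r, hr⟩ := memG1_iff.mp hA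
  have ps : (2:ℤ)^s ≠ 0 := by positivity
  have hdiv : A 1 0 / 2^s = r := by rw [hr, Int.mul_ediv_cancel_left _ ps]
  have e1 : ∀ x : ℤ, ((x : ZMod 2) = 0 ↔ (2:ℤ) ∣ x) := by
    intro x
    rw [show ((2:ℤ)) = ((2:ℕ) : ℤ) by norm_num, ← ZMod.intCast_zmod_eq_zero_iff_dvd]
  constructor
  · intro h
    have h' : (((A 0 1 : ℤ) : ZMod 2), ((A 1 0 / 2^s : ℤ) : ZMod 2)) = ((0 : ZMod 2), (0 : ZMod 2)) := by
      have := congrArg Multiplicative.toAdd h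
      simpa [phi] using this
    obtain ⟨h1, h2⟩ := Prod.mk.injEq .. ▸ h'
    rw [Prod.mk.injEq] at h'
    refine ⟨(e1 _).mp h'.1, ?_⟩
    have h2 : (2:ℤ) ∣ r := by rw [← hdiv]; exact (e1 _).mp h'.2
    obtain ⟨k, hk⟩ := h2
    exact ⟨k, by rw [hr, hk, pow_succ]; ring⟩
  · rintro ⟨h1, h2⟩
    have h2' : (2:ℤ) ∣ r := by
      obtain ⟨k, hk⟩ := h2
      refine ⟨k, ?_⟩
      have : (2:ℤ)^s * r = 2^s * (2 * k) := by rw [← hr, hk, pow_succ]; ring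
      exact mul_left_cancel₀ ps this
    have : phi s hs ⟨A, hA⟩ =
        Multiplicative.ofAdd (((A 0 1 : ℤ) : ZMod 2), ((A 1 0 / 2^s : ℤ) : ZMod 2)) := rfl
    rw [this, hdiv, (e1 _).mpr h1, (e1 _).mpr h2']
    rfl


/-- For `s ≥ 1`, the subgroup `H` of `Γ₁(2^s)` generated by `Γ(2^{s+1})` together with all
squares and commutators of elements of `Γ₁(2^s)` has index 4 in `Γ₁(2^s)`, and `Γ₁(2^s)` is
generated by `H` together with `τ = [[1,1],[0,1]]` and `γ = [[1,0],[2^s,1]]`; i.e.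
`V₂(Γ₁(2^s)/Γ(2^{s+1})) ≅ (ℤ/2ℤ)²` with basis the images of `τ` and `γ`. -/
theorem V2_Gamma1_two_pow (s : ℕ) (hs : 1 ≤ s) (H : Subgroup SL(2, ℤ))
    (hH : H = Subgroup.closure ((Gamma (2 ^ (s + 1)) : Set SL(2, ℤ)) ∪
      {x | (∃ A ∈ Gamma1 (2 ^ s), x = A ^ 2) ∨
        ∃ A ∈ Gamma1 (2 ^ s), ∃ B ∈ Gamma1 (2 ^ s), x = A * B * A⁻¹ * B⁻¹})) :
    H.relIndex (Gamma1 (2 ^ s)) = 4 ∧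
      Subgroup.closure ((H : Set SL(2, ℤ)) ∪ {tauMat, gammaMat s}) = Gamma1 (2 ^ s) := by
  have hsq : ∀ X : SL(2,ℤ), X ∈ Gamma1 (2^s) → X^2 ∈ H := by
    intro X hX
    rw [hH]
    exact Subgroup.subset_closure (Or.inr (Or.inl ⟨X, hX, rfl⟩))
  have hGa : ∀ X : SL(2,ℤ), X ∈ Gamma (2^(s+1)) → X ∈ H := by
    intro X hX
    rw [hH]
    exact Subgroup.subset_closure (Or.inl hX)
  have hτ := tau_memG1 s
  have hγ := gamma_memG1 s
  have h2d : (2:ℤ) ∣ 2^(s+1) := dvd_pow_self 2 (Nat.succ_ne_zero s)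
  set φ := phi s hs with hφdef
  set K := Subgroup.map (Gamma1 (2^s)).subtype φ.ker with hK
  have hGsub : ∀ X : SL(2,ℤ), X ∈ Gamma (2^(s+1)) → X ∈ Gamma1 (2^s) := by
    intro X hX
    rw [memG_iff] at hX
    rw [memG1_iff]
    have hd : (2:ℤ)^s ∣ 2^(s+1) := pow_dvd_pow 2 (by omega)
    exact ⟨dvd_trans hd hX.1, dvd_trans hd hX.2.2.2, dvd_trans hd hX.2.2.1⟩
  have hKH : K ≤ H := by
    rintro x ⟨⟨A, hA⟩, hker, rfl⟩
    have h := (phi_eq_one_iff hs hA).mp (MonoidHom.mem_ker.mp hker)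
    exact ker_sub_H hs H hsq hGa hA h.1 h.2
  have hHK : H ≤ K := by
    rw [hH, Subgroup.closure_le]
    rintro x (hx | (⟨A, hA, rfl⟩ | ⟨A, hA, B, hB, rfl⟩))
    · have hx' : x ∈ Gamma (2^(s+1)) := hx
      have hx1 : x ∈ Gamma1 (2^s) := hGsub x hx'
      rw [memG_iff] at hx'
      show x ∈ K
      refine ⟨⟨x, hx1⟩, ?_, rfl⟩
      show ⟨x, hx1⟩ ∈ φ.ker
      rw [MonoidHom.mem_ker, phi_eq_one_iff hs hx1]
      exact ⟨dvd_trans h2d hx'.2.1, hx'.2.2.1⟩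
    · show A^2 ∈ K
      refine ⟨⟨A, hA⟩^2, ?_, ?_⟩
      · show ⟨A, hA⟩^2 ∈ φ.ker
        rw [MonoidHom.mem_ker, _root_.map_pow]
        exact (by decide : ∀ g : Multiplicative (ZMod 2 × ZMod 2), g^2 = 1) _
      · simp
    · show A * B * A⁻¹ * B⁻¹ ∈ K
      refine ⟨⟨A, hA⟩ * ⟨B, hB⟩ * ⟨A, hA⟩⁻¹ * ⟨B, hB⟩⁻¹, ?_, ?_⟩
      · show ⟨A, hA⟩ * ⟨B, hB⟩ * ⟨A, hA⟩⁻¹ * ⟨B, hB⟩⁻¹ ∈ φ.ker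
        rw [MonoidHom.mem_ker, _root_.map_mul, _root_.map_mul, _root_.map_mul, _root_.map_inv, _root_.map_inv]
        have hc : ∀ a b : Multiplicative (ZMod 2 × ZMod 2), a * b * a⁻¹ * b⁻¹ = 1 := by decide
        exact hc _ _
      · simp
  have hHKeq : H = K := le_antisymm hHK hKH
  have hsurj : Function.Surjective φ := by
    intro y
    have h4 : ∀ w : Multiplicative (ZMod 2 × ZMod 2),
        w = 1 ∨ w = Multiplicative.ofAdd (1,0) ∨
        w = Multiplicative.ofAdd (0,1) ∨ w = Multiplicative.ofAdd (1,1) := by decide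
    rcases h4 y with rfl | rfl | rfl | rfl
    · exact ⟨1, _root_.map_one φ⟩
    · exact ⟨⟨tauMat, hτ⟩, phi_tau s hs⟩
    · exact ⟨⟨gammaMat s, hγ⟩, phi_gamma s hs⟩
    · exact ⟨⟨tauMat, hτ⟩ * ⟨gammaMat s, hγ⟩,
        by rw [_root_.map_mul, phi_tau, phi_gamma]; decide⟩
  have hrel : H.relIndex (Gamma1 (2^s)) = 4 := by
    have h1 : H.subgroupOf (Gamma1 (2^s)) = φ.ker := by
      rw [hHKeq, hK, Subgroup.subgroupOf,
        Subgroup.comap_map_eq_self_of_injective (Subgroup.subtype_injective _)]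
    rw [Subgroup.relIndex, h1, Subgroup.index_ker, MonoidHom.range_eq_top.mpr hsurj,
      Subgroup.card_top, Nat.card_eq_fintype_card]
    rfl
  refine ⟨hrel, ?_⟩
  have htau_cl : tauMat ∈ Subgroup.closure ((H : Set SL(2,ℤ)) ∪ {tauMat, gammaMat s}) :=
    Subgroup.subset_closure (Or.inr (Set.mem_insert _ _))
  have hgam_cl : gammaMat s ∈ Subgroup.closure ((H : Set SL(2,ℤ)) ∪ {tauMat, gammaMat s}) :=
    Subgroup.subset_closure (Or.inr (Set.mem_insert_of_mem _ rfl))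
  have hmem : ∀ (B : SL(2,ℤ)) (hB : B ∈ Gamma1 (2^s)), φ ⟨B, hB⟩ = 1 →
      B ∈ Subgroup.closure ((H : Set SL(2,ℤ)) ∪ {tauMat, gammaMat s}) := by
    intro B hB h
    have h' := (phi_eq_one_iff hs hB).mp h
    exact Subgroup.subset_closure (Or.inl (ker_sub_H hs H hsq hGa hB h'.1 h'.2))
  apply le_antisymm
  · rw [Subgroup.closure_le]
    refine Set.union_subset ?_ ?_
    · intro x hx
      exact (le_trans (le_of_eq hHKeq) (Subgroup.map_subtype_le _)) hx
    · rintro x hx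
      rcases hx with rfl | hx
      · exact hτ
      · rw [Set.mem_singleton_iff] at hx; rw [hx]; exact hγ
  · intro A hA
    have h4 : ∀ w : Multiplicative (ZMod 2 × ZMod 2),
        w = 1 ∨ w = Multiplicative.ofAdd (1,0) ∨
        w = Multiplicative.ofAdd (0,1) ∨ w = Multiplicative.ofAdd (1,1) := by decide
    rcases h4 (φ ⟨A, hA⟩) with h | h | h | h
    · exact hmem A hA h
    · have hmul : A * tauMat⁻¹ ∈ Gamma1 (2^s) := mul_mem hA (inv_mem hτ)
      have hone : φ ⟨A * tauMat⁻¹, hmul⟩ = 1 := by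
        have e : (⟨A * tauMat⁻¹, hmul⟩ : ↥(Gamma1 (2^s))) = ⟨A, hA⟩ * ⟨tauMat, hτ⟩⁻¹ := rfl
        rw [e, _root_.map_mul, _root_.map_inv, h, phi_tau]
        decide
      have hAeq : (A * tauMat⁻¹) * tauMat = A := inv_mul_cancel_right A tauMat
      exact hAeq ▸ mul_mem (hmem _ hmul hone) htau_cl
    · have hmul : A * (gammaMat s)⁻¹ ∈ Gamma1 (2^s) := mul_mem hA (inv_mem hγ)
      have hone : φ ⟨A * (gammaMat s)⁻¹, hmul⟩ = 1 := by
        have e : (⟨A * (gammaMat s)⁻¹, hmul⟩ : ↥(Gamma1 (2^s))) = ⟨A, hA⟩ * ⟨gammaMat s, hγ⟩⁻¹ := rfl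
        rw [e, _root_.map_mul, _root_.map_inv, h, phi_gamma]
        decide
      have hAeq : (A * (gammaMat s)⁻¹) * gammaMat s = A := inv_mul_cancel_right A _
      exact hAeq ▸ mul_mem (hmem _ hmul hone) hgam_cl
    · have hτγ : tauMat * gammaMat s ∈ Gamma1 (2^s) := mul_mem hτ hγ
      have hmul : A * (tauMat * gammaMat s)⁻¹ ∈ Gamma1 (2^s) := mul_mem hA (inv_mem hτγ)
      have hone : φ ⟨A * (tauMat * gammaMat s)⁻¹, hmul⟩ = 1 := by
        have e : (⟨A * (tauMat * gammaMat s)⁻¹, hmul⟩ : ↥(Gamma1 (2^s))) =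
            ⟨A, hA⟩ * (⟨tauMat, hτ⟩ * ⟨gammaMat s, hγ⟩)⁻¹ := rfl
        rw [e, _root_.map_mul, _root_.map_inv, _root_.map_mul, h, phi_tau, phi_gamma]
        decide
      have hAeq : (A * (tauMat * gammaMat s)⁻¹) * tauMat * gammaMat s = A := by
        group
      exact hAeq ▸ mul_mem (mul_mem (hmem _ hmul hone) htau_cl) hgam_cl
end

section
/- A finite étale cover of degree 2 is Galois (algebraic form): Let R be a nontrivial commutative ring in which 2 is invertible, and let A be a commutative R-algebra that is étale over R and finite locally free of rank 2 as an R-module. Then there exists an R-algebra automorphism σ : A → A such that σ ∘ σ = id, σ ≠ id, and the fixed subalgebra {a ∈ A : σ(a) = a} equals the image of R under the structure map R → A. -/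
universe u

open Finset

/-- Trace computed from any finite dual system agrees with the matrix trace in a basis. -/
lemma dualSystem_trace {R M : Type*} [CommRing R] [AddCommGroup M] [Module R M]
    {n : ℕ} (f : Fin n → M) (g : Fin n → M →ₗ[R] R)
    (hfg : ∀ x, ∑ i, g i x • f i = x)
    {ι : Type*} [Fintype ι] [DecidableEq ι] (b : Module.Basis ι R M) (L : M →ₗ[R] M) :
    ∑ i, g i (L (f i)) = Matrix.trace (LinearMap.toMatrix b b L) := by
  have key : ∀ i, g i (L (f i)) = ∑ j, b.repr (L (f i)) j * g i (b j) := by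
    intro i
    conv_lhs => rw [← b.sum_repr (L (f i))]
    rw [map_sum]
    simp [mul_comm]
  have key2 : ∀ j, b.repr (L (b j)) j = ∑ i, g i (b j) * b.repr (L (f i)) j := by
    intro j
    conv_lhs => rw [← hfg (b j)]
    rw [map_sum, map_sum]
    simp [Finsupp.smul_apply, smul_eq_mul]
  calc ∑ i, g i (L (f i)) = ∑ i, ∑ j, b.repr (L (f i)) j * g i (b j) := by
        simp_rw [key]
    _ = ∑ j, ∑ i, g i (b j) * b.repr (L (f i)) j := by
        rw [Finset.sum_comm]; simp_rw [mul_comm]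
    _ = ∑ j, b.repr (L (b j)) j := by simp_rw [key2]
    _ = Matrix.trace (LinearMap.toMatrix b b L) := by
        rw [Matrix.trace]
        simp [LinearMap.toMatrix_apply, Matrix.diag]

open Finset

/-- Polarized Cayley–Hamilton for 2×2 matrices. -/
lemma matrix_polar {R : Type*} [CommRing R] (M N : Matrix (Fin 2) (Fin 2) R) :
    M * N + N * M + (M.trace * N.trace - (M * N).trace) • (1 : Matrix (Fin 2) (Fin 2) R)
      = M.trace • N + N.trace • M := by
  ext i j
  fin_cases i <;> fin_cases j <;>
    simp [Matrix.mul_apply, Matrix.trace, Matrix.diag, Fin.sum_univ_two, Matrix.one_apply] <;>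
    ring

/-- The quadratic trace identity for a commutative algebra free of rank 2. -/
lemma quadratic_identity {R A : Type*} [CommRing R] [CommRing A] [Algebra R A]
    (b : Module.Basis (Fin 2) R A) (T : A → R)
    (hT : ∀ z, T z = Matrix.trace (LinearMap.toMatrix b b (LinearMap.mulLeft R z)))
    (x y : A) :
    2 • (x * y) + (T x * T y - T (x * y)) • (1 : A) = T x • y + T y • x := by
  set M := LinearMap.toMatrix b b (LinearMap.mulLeft R x) with hM
  set N := LinearMap.toMatrix b b (LinearMap.mulLeft R y) with hN
  have hMN : M * N = LinearMap.toMatrix b b (LinearMap.mulLeft R (x * y)) := by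
    rw [hM, hN, ← LinearMap.toMatrix_comp b b b, ← LinearMap.mulLeft_mul]
  have hNM : N * M = LinearMap.toMatrix b b (LinearMap.mulLeft R (y * x)) := by
    rw [hM, hN, ← LinearMap.toMatrix_comp b b b, ← LinearMap.mulLeft_mul]
  have h1 : Matrix.toLin b b (M * N) = LinearMap.mulLeft R (x * y) := by
    rw [hMN, Matrix.toLin_toMatrix]
  have h2 : Matrix.toLin b b (N * M) = LinearMap.mulLeft R (y * x) := by
    rw [hNM, Matrix.toLin_toMatrix]
  have h3 : Matrix.toLin b b (1 : Matrix (Fin 2) (Fin 2) R) = LinearMap.id := by simp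
  have hlin := congrArg (Matrix.toLin b b) (matrix_polar M N)
  simp only [map_add, map_smul] at hlin
  have h4 : Matrix.toLin b b N = LinearMap.mulLeft R y := by rw [hN, Matrix.toLin_toMatrix]
  have h5 : Matrix.toLin b b M = LinearMap.mulLeft R x := by rw [hM, Matrix.toLin_toMatrix]
  rw [h1, h2, h3, h4, h5] at hlin
  have hTx : T x = M.trace := hT x
  have hTy : T y = N.trace := hT y
  have hTxy : T (x * y) = (M * N).trace := by rw [hT (x * y), hMN]
  have := congrFun (congrArg (fun (L : A →ₗ[R] A) => (L : A → A)) hlin) 1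
  simp only [LinearMap.add_apply, LinearMap.smul_apply, LinearMap.mulLeft_apply,
    LinearMap.id_apply, mul_one] at this
  rw [hTx, hTy, hTxy, two_smul]
  calc x * y + x * y + (M.trace * N.trace - (M * N).trace) • (1 : A)
      = x * y + y * x + (M.trace * N.trace - (M * N).trace) • (1 : A) := by
        rw [mul_comm y x]
    _ = M.trace • y + N.trace • x := this

/-- The trace of multiplication by 1 on a rank-2 free module is 2. -/
lemma trace_one_eq_two {R A : Type*} [CommRing R] [CommRing A] [Algebra R A]
    (b : Module.Basis (Fin 2) R A) :
    Matrix.trace (LinearMap.toMatrix b b (LinearMap.mulLeft R (1 : A))) = 2 := by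
  rw [LinearMap.mulLeft_one, LinearMap.toMatrix_id, Matrix.trace_one]
  norm_num
open Finset

section
variable {R : Type*} [CommRing R] {A : Type*} [CommRing A] [Algebra R A]
  [Module.Finite R A] [Module.Projective R A]

lemma local_key {n : ℕ} (f : Fin n → A) (g : Fin n → (A →ₗ[R] R))
    (hfg : ∀ a : A, ∑ i, g i a • f i = a)
    (T : A → R) (hT : ∀ a, T a = ∑ i, g i (a * f i))
    (P : Ideal R) [P.IsMaximal]
    (hrank : Module.rank (Localization.AtPrime P) (LocalizedModule P.primeCompl A) = 2) :
    algebraMap R (Localization.AtPrime P) (T 1) = 2 ∧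
    ∀ x y : A, LocalizedModule.mkLinearMap P.primeCompl A
        (2 • (x * y) + (T x * T y - T (x * y)) • (1 : A))
      = LocalizedModule.mkLinearMap P.primeCompl A (T x • y + T y • x) := by
  classical
  set S := P.primeCompl
  set Rp := Localization.AtPrime P with hRp
  set Ap := LocalizedModule S A with hAp
  set mkA : A →ₗ[R] Ap := LocalizedModule.mkLinearMap S A with hmkA
  -- localized dual system
  set gP : Fin n → (Ap →ₗ[Rp] Rp) := fun i =>
    IsLocalizedModule.mapExtendScalars S mkA (Algebra.linearMap R Rp) Rp (g i) with hgPdef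
  have hgP : ∀ i (a : A), gP i (mkA a) = algebraMap R Rp (g i a) := by
    intro i a
    simp [hgPdef, IsLocalizedModule.mapExtendScalars_apply_apply]
  have hmul : ∀ a b : A, mkA (a * b) = mkA a * mkA b := by
    intro a b
    show LocalizedModule.mk (a * b) 1 = LocalizedModule.mk a 1 * LocalizedModule.mk b 1
    rw [LocalizedModule.mk_mul_mk, one_mul]
  have hone : mkA (1 : A) = 1 := by rw [OreLocalization.one_def]; rfl
  have hfgP0 : ∀ a : A, ∑ i, gP i (mkA a) • mkA (f i) = mkA a := by
    intro a
    simp_rw [hgP, algebraMap_smul, ← map_smul, ← map_sum, hfg]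
  have hfgP : ∀ x : Ap, ∑ i, gP i x • mkA (f i) = x := by
    intro x
    induction x using LocalizedModule.induction_on with
    | h m t =>
      have hx : (LocalizedModule.mk m t : Ap) = Localization.mk 1 t • mkA m := by
        show _ = Localization.mk 1 t • LocalizedModule.mk m 1
        rw [LocalizedModule.mk_smul_mk, one_smul, mul_one]
      rw [hx]
      calc ∑ i, gP i (Localization.mk 1 t • mkA m) • mkA (f i)
          = Localization.mk 1 t • ∑ i, gP i (mkA m) • mkA (f i) := by
            rw [Finset.smul_sum]
            refine Finset.sum_congr rfl fun i _ => ?_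
            rw [map_smul, smul_eq_mul, mul_smul]
      _ = Localization.mk 1 t • mkA m := by rw [hfgP0]
  -- instances
  haveI : Module.Finite Rp Ap := Module.Finite.of_isLocalizedModule S mkA
  haveI : Module.Projective Rp Ap := Module.projective_of_isLocalizedModule S mkA
  haveI : Module.FinitePresentation Rp Ap := Module.finitePresentation_of_projective Rp Ap
  haveI : Module.Free Rp Ap := Module.free_of_flat_of_isLocalRing
  have hfr : Module.finrank Rp Ap = 2 := Module.finrank_eq_of_rank_eq hrank
  have hc : ∀ (r : Localization.AtPrime P) (x y : LocalizedModule P.primeCompl A),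
      r • (x * y) = x * (r • y) := by
    intro r x y
    induction r using Localization.induction_on with | H p => ?_
    induction x using LocalizedModule.induction_on with | h a s => ?_
    induction y using LocalizedModule.induction_on with | h b t => ?_
    obtain ⟨c, u⟩ := p
    rw [LocalizedModule.mk_mul_mk, LocalizedModule.mk_smul_mk, LocalizedModule.mk_smul_mk,
      LocalizedModule.mk_mul_mk, mul_smul_comm, mul_left_comm]
  have ha : ∀ (r : Localization.AtPrime P) (x y : LocalizedModule P.primeCompl A),
      r • x * y = r • (x * y) := by
    intro r x y
    induction r using Localization.induction_on with | H p => ?_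
    induction x using LocalizedModule.induction_on with | h a s => ?_
    induction y using LocalizedModule.induction_on with | h b t => ?_
    obtain ⟨c, u⟩ := p
    rw [LocalizedModule.mk_mul_mk, LocalizedModule.mk_smul_mk, LocalizedModule.mk_smul_mk,
      LocalizedModule.mk_mul_mk, smul_mul_assoc, mul_assoc]
  letI : Algebra Rp Ap := Algebra.ofModule ha (fun r x y => (hc r x y).symm)
  set b : Module.Basis (Fin 2) Rp Ap := Module.finBasisOfFinrankEq Rp Ap hfr with hb
  set TP : Ap → Rp := fun z =>
    Matrix.trace (LinearMap.toMatrix b b (LinearMap.mulLeft Rp z)) with hTP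
  have htr : ∀ z : Ap, ∑ i, gP i (z * mkA (f i)) = TP z := by
    intro z
    have := dualSystem_trace (fun i => mkA (f i)) gP hfgP b (LinearMap.mulLeft Rp z)
    simpa only [LinearMap.mulLeft_apply] using this
  have hcomp : ∀ a : A, algebraMap R Rp (T a) = TP (mkA a) := by
    intro a
    rw [← htr (mkA a), hT, map_sum]
    refine Finset.sum_congr rfl fun i _ => ?_
    rw [← hmul, hgP]
  constructor
  · rw [hcomp 1, hone]
    exact trace_one_eq_two b
  · intro x y
    have hq := quadratic_identity b TP (fun z => rfl) (mkA x) (mkA y)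
    have e1 : mkA (2 • (x * y) + (T x * T y - T (x * y)) • (1 : A))
        = 2 • (mkA x * mkA y) + (TP (mkA x) * TP (mkA y) - TP (mkA x * mkA y)) • (1 : Ap) := by
      rw [map_add, map_nsmul, hmul, map_smul, hone]
      congr 1
      simp only [← hmul, ← hcomp, ← map_mul, ← map_sub]
      rw [algebraMap_smul]
    have e2 : mkA (T x • y + T y • x)
        = TP (mkA x) • mkA y + TP (mkA y) • mkA x := by
      rw [map_add, map_smul, map_smul, ← hcomp, ← hcomp,
        algebraMap_smul (A := Rp), algebraMap_smul (A := Rp)]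
    show mkA _ = mkA _
    rw [e1, e2, hq]
end


/-- A finite étale cover of degree 2 is Galois (algebraic form): if `2` is invertible in a
nontrivial commutative ring `R` and `A` is an étale `R`-algebra that is finite locally free of
rank 2 as an `R`-module, then `A` has an `R`-algebra involution `σ ≠ id` whose fixed subring
is exactly the image of `R`. -/
theorem etale_rank_two_is_galois (R A : Type u) [CommRing R] [Nontrivial R] [CommRing A]
    [Algebra R A] (h2 : IsUnit (2 : R))
    [Algebra.Etale R A] [Module.Finite R A] [Module.Projective R A]
    (hrank : ∀ (P : Ideal R) (_ : P.IsPrime),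
      Module.rank (Localization.AtPrime P) (LocalizedModule P.primeCompl A) = 2) :
    ∃ σ : A ≃ₐ[R] A, (∀ a : A, σ (σ a) = a) ∧ σ ≠ AlgEquiv.refl ∧
      {a : A | σ a = a} = Set.range (algebraMap R A) := by
  classical
  obtain ⟨n, π, hπ⟩ := Module.Finite.exists_fin' R A
  obtain ⟨s, hs⟩ := Module.projective_lifting_property π LinearMap.id hπ
  set f : Fin n → A := fun i => π (Pi.single i 1) with hfdef
  set g : Fin n → (A →ₗ[R] R) := fun i => (LinearMap.proj i).comp s with hgdef
  have hfg : ∀ a : A, ∑ i, g i a • f i = a := by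
    intro a
    have h1 : ∑ i, g i a • f i = π (∑ i, (s a i) • (Pi.single i (1:R) : Fin n → R)) := by
      rw [map_sum]
      refine Finset.sum_congr rfl fun i _ => ?_
      rw [map_smul]
      rfl
    have h2' : (∑ i, (s a i) • (Pi.single i (1:R) : Fin n → R)) = s a := by
      ext j
      simp [Pi.single_apply, mul_comm]
    rw [h1, h2']
    exact DFunLike.congr_fun hs a
  set T : A → R := fun a => ∑ i, g i (a * f i) with hTdef
  have Tzero : T 0 = 0 := by simp [hTdef]
  have Tadd : ∀ x y, T (x + y) = T x + T y := by
    intro x y; simp [hTdef, add_mul, Finset.sum_add_distrib]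
  have Tsub : ∀ x y, T (x - y) = T x - T y := by
    intro x y; simp [hTdef, sub_mul, Finset.sum_sub_distrib]
  have Tsmul : ∀ (r : R) x, T (r • x) = r * T x := by
    intro r x; simp [hTdef, smul_mul_assoc, Finset.mul_sum]
  -- trace of 1 is 2
  have K1 : T 1 = 2 := by
    have h0 : T 1 - 2 = 0 := by
      apply eq_zero_of_localization
      intro J hJ
      haveI := hJ
      have hk := (local_key f g hfg T (fun a => rfl) J (hrank J hJ.isPrime)).1
      rw [map_sub, hk, map_ofNat, sub_self]
    exact sub_eq_zero.mp h0
  -- quadratic trace identity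
  have K2 : ∀ x y : A, 2 • (x * y) + (T x * T y - T (x * y)) • (1 : A)
      = T x • y + T y • x := by
    intro x y
    refine Module.eq_of_localization_maximal
      (fun (P : Ideal R) (_ : P.IsMaximal) => LocalizedModule P.primeCompl A)
      (fun (P : Ideal R) (_ : P.IsMaximal) => LocalizedModule.mkLinearMap P.primeCompl A)
      _ _ (fun P hP => ?_)
    haveI := hP
    exact (local_key f g hfg T (fun a => rfl) P (hrank P hP.isPrime)).2 x y
  have K2' : ∀ x y : A, x * y + x * y +
      (algebraMap R A (T x) * algebraMap R A (T y) - algebraMap R A (T (x * y)))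
      = algebraMap R A (T x) * y + algebraMap R A (T y) * x := by
    intro x y
    have h := K2 x y
    rw [two_nsmul, Algebra.smul_def, Algebra.smul_def, Algebra.smul_def, map_sub, map_mul,
      mul_one] at h
    exact h
  have Talg : ∀ r : R, T (algebraMap R A r) = 2 * r := by
    intro r
    rw [Algebra.algebraMap_eq_smul_one, Tsmul, K1, mul_comm]
  have key_mul : ∀ x y : A, algebraMap R A (T (x * y)) - x * y
      = (algebraMap R A (T x) - x) * (algebraMap R A (T y) - y) := by
    intro x y
    linear_combination -K2' x y
  set σf : A → A := fun a => algebraMap R A (T a) - a with hσf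
  have σcommutes : ∀ r : R, σf (algebraMap R A r) = algebraMap R A r := by
    intro r
    rw [hσf]
    show algebraMap R A (T (algebraMap R A r)) - algebraMap R A r = algebraMap R A r
    rw [Talg, two_mul, map_add]
    ring
  let σh : A →ₐ[R] A :=
    { toFun := σf
      map_one' := by
        show algebraMap R A (T 1) - 1 = 1
        rw [K1, map_ofNat]
        ring
      map_mul' := fun x y => by exact key_mul x y
      map_zero' := by show algebraMap R A (T 0) - 0 = 0; rw [Tzero]; simp
      map_add' := fun x y => by
        show algebraMap R A (T (x + y)) - (x + y) = _
        rw [Tadd, map_add]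
        show _ = (algebraMap R A (T x) - x) + (algebraMap R A (T y) - y)
        ring
      commutes' := σcommutes }
  have invol : ∀ a : A, σh (σh a) = a := by
    intro a
    show algebraMap R A (T (algebraMap R A (T a) - a)) - (algebraMap R A (T a) - a) = a
    rw [Tsub, Talg, two_mul, map_sub, map_add]
    ring
  set σ : A ≃ₐ[R] A := AlgEquiv.ofAlgHom σh σh
    (AlgHom.ext fun a => invol a) (AlgHom.ext fun a => invol a) with hσdef
  have σapp : ∀ a : A, σ a = algebraMap R A (T a) - a := fun a => rfl
  -- fixed points lie in the image of R
  have hfix : ∀ a : A, σ a = a → a ∈ Set.range (algebraMap R A) := by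
    intro a ha
    rw [σapp] at ha
    have h2a : algebraMap R A (T a) = a + a := by linear_combination ha
    refine ⟨(↑h2.unit⁻¹ : R) * T a, ?_⟩
    have hv2 : ((↑h2.unit⁻¹ : R) * 2) = 1 := by
      have hu := h2.unit.inv_mul
      rwa [IsUnit.unit_spec] at hu
    calc algebraMap R A ((↑h2.unit⁻¹ : R) * T a)
        = algebraMap R A (↑h2.unit⁻¹ : R) * (a + a) := by rw [map_mul, h2a]
      _ = algebraMap R A ((↑h2.unit⁻¹ : R) * 2) * a := by rw [map_mul, map_ofNat]; ring
      _ = a := by rw [hv2, map_one, one_mul]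
  -- the algebra map is not surjective
  have hnotsurj : ¬ Function.Surjective (algebraMap R A) := by
    intro hsur
    obtain ⟨P, hP⟩ := Ideal.exists_maximal R
    haveI := hP
    have hspan : ∀ x : LocalizedModule P.primeCompl A,
        ∃ c : Localization.AtPrime P, c • (1 : LocalizedModule P.primeCompl A) = x := by
      intro x
      induction x using LocalizedModule.induction_on with
      | h m t =>
        obtain ⟨r, hr⟩ := hsur m
        refine ⟨Localization.mk r t, ?_⟩
        rw [show (1 : LocalizedModule P.primeCompl A) = LocalizedModule.mk (1 : A) 1 by
          rw [OreLocalization.one_def]]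
        show Localization.mk r t • LocalizedModule.mk (1 : A) (1 : P.primeCompl) = _
        rw [LocalizedModule.mk_smul_mk, mul_one, ← Algebra.algebraMap_eq_smul_one, hr]
    have hsurj : Function.Surjective
        (LinearMap.toSpanSingleton (Localization.AtPrime P)
          (LocalizedModule P.primeCompl A) 1) := by
      intro x
      obtain ⟨c, hc⟩ := hspan x
      exact ⟨c, hc⟩
    have hle := LinearMap.rank_le_of_surjective _ hsurj
    rw [Module.rank_self, hrank P hP.isPrime] at hle
    norm_num at hle
  refine ⟨σ, invol, ?_, ?_⟩
  · intro h
    apply hnotsurj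
    intro a
    have : σ a = a := by rw [h]; rfl
    obtain ⟨r, hr⟩ := hfix a this
    exact ⟨r, hr⟩
  · ext a
    constructor
    · exact hfix a
    · rintro ⟨r, rfl⟩
      exact σcommutes r
end

section
/- If N₁ and N₂ are positive integers with gcd(N₁,N₂) odd and lcm(N₁,N₂) ≥ 5 (condition (*)), then the subgroup Γ = Γ₁(N₁) ⊓ Γ(N₂) of SL(2,ℤ) is torsion-free: its only element of finite order is the identity. In particular −I ∉ Γ. -/
open Matrix MatrixGroups CongruenceSubgroup

/-- Cayley–Hamilton for a 2×2 matrix of determinant 1. -/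
private lemma sq_eq_trace_smul {M : Matrix (Fin 2) (Fin 2) ℤ} (h : M.det = 1) :
    M * M = M.trace • M - 1 := by
  rw [Matrix.det_fin_two] at h
  rw [Matrix.trace_fin_two]
  ext i j
  rw [Matrix.mul_apply, Fin.sum_univ_two, Matrix.sub_apply, Matrix.smul_apply, smul_eq_mul]
  fin_cases i <;> fin_cases j <;>
    simp [Matrix.one_apply] <;> linarith [h]

/-- Growth of the trace sequence when `|t| ≥ 3`. -/
private lemma trace_seq_growth (a : ℕ → ℤ) (t : ℤ) (ht : 3 ≤ |t|) (h0 : a 0 = 2) (h1 : a 1 = t)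
    (hrec : ∀ n, a (n + 2) = t * a (n + 1) - a n) :
    ∀ n, 3 ≤ |a (n + 1)| ∧ |a (n + 1)| ≤ |a (n + 2)| := by
  intro n
  induction n with
  | zero =>
    refine ⟨by rw [h1]; exact ht, ?_⟩
    have h2 : a 2 = t * t - 2 := by rw [hrec 0, h0, h1]
    have h9 : (9 : ℤ) ≤ t * t := by nlinarith [abs_mul_abs_self t]
    have h3t : 3 * |t| ≤ t * t := by nlinarith [abs_mul_abs_self t]
    have : |a 2| = t * t - 2 := by rw [h2, abs_of_nonneg]; linarith
    rw [this, h1]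
    linarith
  | succ n ih =>
    obtain ⟨h3, hle⟩ := ih
    have key : |a (n + 2)| + 3 ≤ |a (n + 3)| := by
      have h1' : |t * a (n + 2) - a (n + 1)| ≥ |t * a (n + 2)| - |a (n + 1)| :=
        abs_sub_abs_le_abs_sub _ _
      have h2' : |t * a (n + 2)| = |t| * |a (n + 2)| := abs_mul _ _
      have := hrec (n + 1)
      have h32 : 3 ≤ |a (n + 2)| := le_trans h3 hle
      have : a (n + 1 + 2) = t * a (n + 2) - a (n + 1) := by
        simpa using hrec (n + 1)
      rw [show n + 3 = n + 1 + 2 from rfl, this]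
      nlinarith [abs_nonneg (a (n + 2))]
    exact ⟨le_trans h3 hle, by linarith⟩

/-- A finite-order element of `SL(2,ℤ)` with trace `2` is the identity. -/
private lemma eq_one_of_trace_eq_two {A : SL(2, ℤ)} (hfin : IsOfFinOrder A)
    (ht : (A : Matrix (Fin 2) (Fin 2) ℤ).trace = 2) : A = 1 := by
  obtain ⟨n, hn, hAn⟩ := isOfFinOrder_iff_pow_eq_one.mp hfin
  set M : Matrix (Fin 2) (Fin 2) ℤ := (A : Matrix (Fin 2) (Fin 2) ℤ) with hM
  have hdet : M.det = 1 := A.2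
  have hsq : M * M = (2 : ℤ) • M - 1 := by rw [← ht]; exact sq_eq_trace_smul hdet
  have hpow : ∀ k : ℕ, M ^ k = 1 + (k : ℤ) • (M - 1) := by
    intro k
    induction k with
    | zero => simp
    | succ k ih =>
      have : M ^ (k + 1) = M ^ k * M := pow_succ M k
      rw [this, ih]
      push_cast
      have expand : (1 + (k : ℤ) • (M - 1)) * M = M + (k : ℤ) • (M * M - M) := by
        rw [add_mul, one_mul, smul_mul_assoc, sub_mul, one_mul]
      rw [expand, hsq]
      have : (2 : ℤ) • M - 1 - M = M - 1 := by
        rw [two_smul]; abel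
      rw [this]
      rw [add_smul, one_smul]
      abel
  have hMn : M ^ n = 1 := by
    rw [hM, ← Matrix.SpecialLinearGroup.coe_pow, hAn]; rfl
  have hzero : (n : ℤ) • (M - 1) = 0 := by
    have h := hpow n
    rw [hMn] at h
    exact (left_eq_add.mp h)
  have hM1 : M = 1 := by
    have : M - 1 = 0 := by
      ext i j
      have h0 := congrFun (congrFun hzero i) j
      simp only [Matrix.smul_apply, smul_eq_mul, Matrix.zero_apply] at h0
      have hn' : (n : ℤ) ≠ 0 := Int.natCast_ne_zero.mpr hn.ne'
      rcases mul_eq_zero.mp h0 with h | h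
      · exact absurd h hn'
      · exact h
    have := sub_eq_zero.mp this
    exact this
  ext i j
  simp [hM ▸ hM1]

/-- If `gcd(N₁,N₂)` is odd and `lcm(N₁,N₂) ≥ 5`, then `Γ = Γ₁(N₁) ⊓ Γ(N₂)` is torsion-free:
every element of `Γ` of finite order is the identity. In particular `-I ∉ Γ`. -/
theorem Gamma1_inf_Gamma_torsionFree (N₁ N₂ : ℕ) (hN₁ : 0 < N₁) (hN₂ : 0 < N₂)
    (hodd : Odd (Nat.gcd N₁ N₂)) (hlcm : 5 ≤ Nat.lcm N₁ N₂) :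
    (∀ A ∈ Gamma1 N₁ ⊓ Gamma N₂, IsOfFinOrder A → A = 1) ∧
      (-1 : SL(2, ℤ)) ∉ Gamma1 N₁ ⊓ Gamma N₂ := by
  have main : ∀ A ∈ Gamma1 N₁ ⊓ Gamma N₂, IsOfFinOrder A → A = 1 := by
    intro A hA hfin
    obtain ⟨hA1, hA2⟩ := Subgroup.mem_inf.mp hA
    rw [Gamma1_mem] at hA1
    rw [Gamma_mem] at hA2
    set M : Matrix (Fin 2) (Fin 2) ℤ := (A : Matrix (Fin 2) (Fin 2) ℤ) with hMdef
    set t : ℤ := M.trace with htdef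
    have htr : t = A 0 0 + A 1 1 := Matrix.trace_fin_two _
    -- lcm divides t - 2
    have hd1 : (N₁ : ℤ) ∣ t - 2 := by
      have : ((t - 2 : ℤ) : ZMod N₁) = 0 := by
        push_cast [htr]
        rw [hA1.1, hA1.2.1]; ring
      exact (ZMod.intCast_zmod_eq_zero_iff_dvd _ _).mp this
    have hd2 : (N₂ : ℤ) ∣ t - 2 := by
      have : ((t - 2 : ℤ) : ZMod N₂) = 0 := by
        push_cast [htr]
        rw [hA2.1, hA2.2.2.2]; ring
      exact (ZMod.intCast_zmod_eq_zero_iff_dvd _ _).mp this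
    have hdl : (Nat.lcm N₁ N₂ : ℤ) ∣ t - 2 := by
      have h := _root_.lcm_dvd hd1 hd2
      rw [← Int.coe_lcm] at h
      simpa [Int.lcm] using h
    by_cases ht2 : t = 2
    · exact eq_one_of_trace_eq_two hfin ht2
    · -- |t| ≥ 3, contradiction with finite order
      exfalso
      have habs : 3 ≤ |t| := by
        have hne : t - 2 ≠ 0 := sub_ne_zero.mpr ht2
        have h5 : (5 : ℤ) ≤ (Nat.lcm N₁ N₂ : ℤ) := by exact_mod_cast hlcm
        have := Int.le_of_dvd (abs_pos.mpr hne) ((dvd_abs _ _).mpr hdl)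
        have h5' : (5 : ℤ) ≤ |t - 2| := le_trans h5 this
        rcases abs_le.mp (le_refl |t|) with _
        rcases le_or_gt 0 (t - 2) with h | h
        · have : 7 ≤ t := by rw [abs_of_nonneg h] at h5'; linarith
          calc (3:ℤ) ≤ t := by linarith
            _ ≤ |t| := le_abs_self t
        · have : t ≤ -3 := by rw [abs_of_neg h] at h5'; linarith
          calc (3:ℤ) ≤ -t := by linarith
            _ ≤ |t| := neg_le_abs t
      obtain ⟨n, hn, hAn⟩ := isOfFinOrder_iff_pow_eq_one.mp hfin
      have hdet : M.det = 1 := A.2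
      have hsq : M * M = t • M - 1 := sq_eq_trace_smul hdet
      set a : ℕ → ℤ := fun k => (M ^ k).trace with ha
      have h0 : a 0 = 2 := by simp [ha, Matrix.trace_one]
      have h1 : a 1 = t := by simp [ha, htdef]
      have hrec : ∀ k, a (k + 2) = t * a (k + 1) - a k := by
        intro k
        have : M ^ (k + 2) = t • M ^ (k + 1) - M ^ k := by
          rw [show k + 2 = k + 1 + 1 from rfl, pow_succ, pow_succ, mul_assoc, hsq,
            mul_sub, mul_one, Matrix.mul_smul, ← pow_succ]
        show (M ^ (k + 2)).trace = t * (M ^ (k + 1)).trace - (M ^ k).trace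
        rw [this, Matrix.trace_sub, Matrix.trace_smul, smul_eq_mul]
      have hgrow := trace_seq_growth a t habs h0 h1 hrec
      obtain ⟨m, rfl⟩ : ∃ m, n = m + 1 := ⟨n - 1, (Nat.succ_pred_eq_of_pos hn).symm⟩
      have h3 := (hgrow m).1
      have hMn : M ^ (m + 1) = 1 := by
        rw [hMdef, ← Matrix.SpecialLinearGroup.coe_pow, hAn]; rfl
      have : a (m + 1) = 2 := by simp [ha, hMn, Matrix.trace_one]
      rw [this] at h3
      norm_num at h3
  refine ⟨main, fun h => ?_⟩
  have hfin : IsOfFinOrder (-1 : SL(2, ℤ)) :=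
    isOfFinOrder_iff_pow_eq_one.mpr ⟨2, two_pos, by rw [neg_one_sq]⟩
  have := main (-1) h hfin
  have h00 := congrFun (congrFun (congrArg (fun B : SL(2, ℤ) => (B : Matrix (Fin 2) (Fin 2) ℤ)) this) 0) 0
  simp at h00
end
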